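/- arXiv:1804.02999 — 8 statements merged into one kernel-verified Lean document; each statement's English description precedes it below -/
import Mathlib

section
/- Let $G_1,\dots,G_n$ be perfect groups, let $S$ be a subgroup of $G_1\times\dots\times G_n$ whose projection to each factor $G_i$ is surjective, and let $N$ be a normal subgroup of $S$ such that the quotient $S/N$ is solvable. Then $\gamma_n(S)\leq N$; in particular $S/N$ is nilpotent of class at most $n-1$. -/
open Pointwise
open scoped commutatorElement

section Aux

variable {Γ : Type*} [Group Γ] {Δ : Type*} [Group Δ]

private lemma lcs_succ_eq (k : ℕ) :
    (⊤ : Subgroup Γ).lowerCentralSeries (k + 1) = ⁅(⊤ : Subgroup Γ).lowerCentralSeries k, (⊤ : Subgroup Γ)⁆ := rfl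

private lemma lcs_map_surj (f : Γ →* Δ) (hf : Function.Surjective f) (k : ℕ) :
    ((⊤ : Subgroup Γ).lowerCentralSeries k).map f = (⊤ : Subgroup Δ).lowerCentralSeries k := by
  induction k with
  | zero => simpa using Subgroup.map_top_of_surjective f hf
  | succ k ih =>
      rw [lcs_succ_eq, lcs_succ_eq, Subgroup.map_commutator, ih,
        Subgroup.map_top_of_surjective f hf]

private lemma lcs_eq_top_of_perfect (h : ⁅(⊤ : Subgroup Γ), (⊤ : Subgroup Γ)⁆ = ⊤) (k : ℕ) :
    (⊤ : Subgroup Γ).lowerCentralSeries k = ⊤ := by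
  induction k with
  | zero => rfl
  | succ k ih => rw [lcs_succ_eq, ih, h]

private lemma le_sup_ker (f : Γ →* Δ) {U V : Subgroup Γ} (h : V.map f ≤ U.map f) :
    V ≤ U ⊔ f.ker := by
  intro v hv
  obtain ⟨u, hu, he⟩ := h (Subgroup.mem_map_of_mem f hv)
  have hk : u⁻¹ * v ∈ f.ker := by
    rw [MonoidHom.mem_ker, map_mul, map_inv, he, inv_mul_cancel]
  have hv' : v = u * (u⁻¹ * v) := by group
  rw [hv']
  exact Subgroup.mul_mem _ (Subgroup.mem_sup_left hu) (Subgroup.mem_sup_right hk)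

/-- A Grün-type lemma via the Hall–Witt identity: if `K` is a normal subgroup
centralizing `H`, and commutators together with `H` generate everything, then
`⁅K, ⊤⁆ ≤ ⁅⁅K, ⊤⁆, ⊤⁆`. -/
private lemma grun (K H : Subgroup Γ) [K.Normal]
    (hKH : ∀ k ∈ K, ∀ h ∈ H, ⁅k, h⁆ = (1 : Γ))
    (htop : ⁅(⊤ : Subgroup Γ), (⊤ : Subgroup Γ)⁆ ⊔ H = ⊤) :
    ⁅K, (⊤ : Subgroup Γ)⁆ ≤ ⁅⁅K, (⊤ : Subgroup Γ)⁆, (⊤ : Subgroup Γ)⁆ := by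
  haveI hLn : (⁅K, (⊤ : Subgroup Γ)⁆).Normal := Subgroup.commutator_normal K ⊤
  haveI hNn : (⁅⁅K, (⊤ : Subgroup Γ)⁆, (⊤ : Subgroup Γ)⁆).Normal :=
    Subgroup.commutator_normal _ _
  set L := ⁅K, (⊤ : Subgroup Γ)⁆ with hLdef
  set N₀ := ⁅L, (⊤ : Subgroup Γ)⁆ with hNdef
  have key : ∀ a b k : Γ, k ∈ K → ⁅⁅a, b⁆, k⁆ ∈ N₀ := by
    intro a b k hk
    have hid : ⁅⁅a, b⁆, k⁆ =
        (a * b) * ⁅a⁻¹, ⁅b⁻¹, k⁆⁆ * (a * b)⁻¹ *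
          ((k * a) * ⁅⁅a⁻¹, k⁻¹⁆, b⁆ * (k * a)⁻¹) := by group
    have h1 : ⁅a⁻¹, ⁅b⁻¹, k⁆⁆ ∈ N₀ := by
      have hin : ⁅b⁻¹, k⁆ ∈ L := by
        have := Subgroup.commutator_mem_commutator (Subgroup.mem_top b⁻¹) hk
        rwa [Subgroup.commutator_comm] at this
      have := Subgroup.commutator_mem_commutator (Subgroup.mem_top a⁻¹) hin
      rwa [Subgroup.commutator_comm] at this
    have h2 : ⁅⁅a⁻¹, k⁻¹⁆, b⁆ ∈ N₀ := by
      have hin : ⁅a⁻¹, k⁻¹⁆ ∈ L := by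
        have := Subgroup.commutator_mem_commutator (Subgroup.mem_top a⁻¹) (K.inv_mem hk)
        rwa [Subgroup.commutator_comm] at this
      exact Subgroup.commutator_mem_commutator hin (Subgroup.mem_top b)
    rw [hid]
    exact N₀.mul_mem (hNn.conj_mem _ h1 (a * b)) (hNn.conj_mem _ h2 (k * a))
  let good : Subgroup Γ :=
    { carrier := { x | ∀ k ∈ K, ⁅x, k⁆ ∈ N₀ }
      one_mem' := fun k _hk => by
        rw [commutatorElement_one_left]; exact N₀.one_mem
      mul_mem' := by
        intro x y hx hy k hk
        have hid : ⁅x * y, k⁆ = x * ⁅y, k⁆ * x⁻¹ * ⁅x, k⁆ := by group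
        rw [hid]
        exact N₀.mul_mem (hNn.conj_mem _ (hy k hk) x) (hx k hk)
      inv_mem' := by
        intro x hx k hk
        have hid : ⁅x⁻¹, k⁆ = x⁻¹ * ⁅x, k⁆⁻¹ * x := by group
        rw [hid]
        simpa using hNn.conj_mem _ (N₀.inv_mem (hx k hk)) x⁻¹ }
  have hgood : (⊤ : Subgroup Γ) ≤ good := by
    rw [← htop]
    refine sup_le ?_ ?_
    · refine Subgroup.commutator_le.mpr fun a _ b _ => ?_
      exact fun k hk => key a b k hk
    · intro h hh
      show ∀ k ∈ K, ⁅h, k⁆ ∈ N₀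
      intro k hk
      have h1 : ⁅h, k⁆ = 1 := by
        rw [← inv_inv ⁅h, k⁆, commutatorElement_inv, hKH k hk h hh, inv_one]
      rw [h1]; exact N₀.one_mem
  refine Subgroup.commutator_le.mpr fun k hk s _ => ?_
  have hs : ∀ k' ∈ K, ⁅s, k'⁆ ∈ N₀ := hgood (Subgroup.mem_top s)
  rw [← commutatorElement_inv s k]
  exact N₀.inv_mem (hs k hk)

end Aux

universe u

private lemma perfect_lcs (n : ℕ) :
    ∀ (G : Fin (n + 1) → Type u) [inst : ∀ i, Group (G i)],
      (∀ i, ⁅(⊤ : Subgroup (G i)), (⊤ : Subgroup (G i))⁆ = ⊤) →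
      ∀ (S : Subgroup (∀ i, G i)),
        (∀ i, Function.Surjective (fun s : ↥S => (s : ∀ j, G j) i)) →
        ⁅(⊤ : Subgroup ↥S).lowerCentralSeries n, (⊤ : Subgroup ↥S).lowerCentralSeries n⁆ = (⊤ : Subgroup ↥S).lowerCentralSeries n := by
  induction n with
  | zero =>
    intro G _ hperf S hS
    simp only [lowerCentralSeries_zero]
    let e : ↥S →* G 0 := (Pi.evalMonoidHom G 0).comp S.subtype
    have hesurj : Function.Surjective e := hS 0
    have heinj : Function.Injective e := by
      intro x y hxy
      apply Subtype.ext
      funext i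
      rw [show i = 0 from Fin.eq_zero i]
      exact hxy
    apply Subgroup.map_injective heinj
    rw [Subgroup.map_commutator, Subgroup.map_top_of_surjective e hesurj, hperf 0]
  | succ n ih =>
    intro G _ hperf S hS
    -- the two projections
    let q : ↥S →* ∀ j : Fin (n + 1), G j.castSucc :=
      MonoidHom.mk' (fun s j => (s : ∀ i, G i) j.castSucc) (fun _ _ => rfl)
    let p : ↥S →* G (Fin.last (n + 1)) :=
      MonoidHom.mk' (fun s => (s : ∀ i, G i) (Fin.last (n + 1))) (fun _ _ => rfl)
    have hp : Function.Surjective p := hS (Fin.last (n + 1))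
    -- the image in the first n+1 coordinates, a subdirect product
    let T : Subgroup (∀ j : Fin (n + 1), G j.castSucc) := q.range
    have hT : ∀ j : Fin (n + 1),
        Function.Surjective (fun t : ↥T => (t : ∀ j', G j'.castSucc) j) := by
      intro j g
      obtain ⟨s, hs⟩ := hS j.castSucc g
      exact ⟨⟨q s, ⟨s, rfl⟩⟩, hs⟩
    have ihB := ih (fun j => G j.castSucc) (fun j => hperf j.castSucc) T hT
    have hqr : Function.Surjective q.rangeRestrict := q.rangeRestrict_surjective
    -- notation
    set B := (⊤ : Subgroup ↥T).lowerCentralSeries n with hB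
    set A := (⊤ : Subgroup ↥S).lowerCentralSeries (n + 1) with hA
    set C := (⊤ : Subgroup ↥S).lowerCentralSeries n with hC
    haveI hAn : A.Normal := Subgroup.lowerCentralSeries_normal ⊤ (n + 1)
    haveI hCn : C.Normal := Subgroup.lowerCentralSeries_normal ⊤ n
    set A' := ⁅A, A⁆ with hA'
    haveI hA'n : A'.Normal := Subgroup.commutator_normal A A
    haveI hBn : B.Normal := Subgroup.lowerCentralSeries_normal ⊤ n
    -- the last coordinate is full on every lower central series term
    have hmapA_top : A.map p = ⊤ := by
      rw [hA, lcs_map_surj p hp, lcs_eq_top_of_perfect (hperf _)]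
    have hAH : (⊤ : Subgroup ↥S) ≤ A ⊔ p.ker :=
      le_sup_ker p (U := A) (V := ⊤) (by rw [hmapA_top]; exact le_top)
    have hDtop : (⁅(⊤ : Subgroup ↥S), (⊤ : Subgroup ↥S)⁆).map p = ⊤ := by
      rw [Subgroup.map_commutator, Subgroup.map_top_of_surjective p hp, hperf]
    have hDH : ⁅(⊤ : Subgroup ↥S), (⊤ : Subgroup ↥S)⁆ ⊔ p.ker = ⊤ :=
      le_antisymm le_top
        (le_sup_ker p (V := (⊤ : Subgroup ↥S)) (by rw [hDtop]; exact le_top))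
    -- elements of q.ker and p.ker commute (disjoint supports)
    have hKH : ∀ k ∈ q.ker, ∀ h ∈ p.ker, ⁅k, h⁆ = (1 : ↥S) := by
      intro k hk h hh
      rw [commutatorElement_eq_one_iff_mul_comm]
      apply Subtype.ext
      funext i
      show (k : ∀ i, G i) i * (h : ∀ i, G i) i = (h : ∀ i, G i) i * (k : ∀ i, G i) i
      refine Fin.lastCases ?_ (fun j => ?_) i
      · rw [show (h : ∀ i, G i) (Fin.last (n + 1)) = 1 from MonoidHom.mem_ker.mp hh,
          mul_one, one_mul]
      · rw [show (k : ∀ i, G i) j.castSucc = 1 from congrFun (MonoidHom.mem_ker.mp hk) j,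
          mul_one, one_mul]
    -- the Grün-type step
    have hgrun := grun q.ker p.ker hKH hDH
    set L := ⁅q.ker, (⊤ : Subgroup ↥S)⁆ with hLdef
    haveI hLn : L.Normal := Subgroup.commutator_normal _ _
    have hLK : L ≤ q.ker := Subgroup.commutator_le_left q.ker ⊤
    have hLtoA : ⁅L, (⊤ : Subgroup ↥S)⁆ ≤ ⁅L, A⁆ := by
      refine Subgroup.commutator_le.mpr fun l hl s _ => ?_
      have hs : (s : ↥S) ∈ (A : Set ↥S) * (p.ker : Set ↥S) := by
        rw [← Subgroup.mul_normal]
        exact hAH (Subgroup.mem_top s)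
      obtain ⟨a, ha, h, hh, rfl⟩ := hs
      have hid : ⁅l, a * h⁆ = ⁅l, a⁆ * (a * ⁅l, h⁆ * a⁻¹) := by group
      rw [hid, hKH l (hLK hl) h hh]
      simpa using Subgroup.commutator_mem_commutator hl ha
    have hLA'' : L ≤ ⁅L, A⁆ := hgrun.trans hLtoA
    have hLlcs : ∀ m, L ≤ (⊤ : Subgroup ↥S).lowerCentralSeries m := by
      intro m
      induction m with
      | zero => exact le_top
      | succ m ihm =>
          exact hLA''.trans ((Subgroup.commutator_mono ihm le_top).trans
            (le_of_eq (lcs_succ_eq m).symm))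
    have hLA : L ≤ A := hLlcs (n + 1)
    have hLA' : L ≤ A' := hLA''.trans (Subgroup.commutator_mono hLA le_rfl)
    -- transporting the induction hypothesis through q
    have hTstab : (⊤ : Subgroup ↥T).lowerCentralSeries (n + 1) = B := by
      refine le_antisymm ?_ ?_
      · rw [lcs_succ_eq]
        exact Subgroup.commutator_le_left _ _
      · calc B = ⁅B, B⁆ := ihB.symm
          _ ≤ ⁅B, ⊤⁆ := Subgroup.commutator_mono le_rfl le_top
          _ = (⊤ : Subgroup ↥T).lowerCentralSeries (n + 1) := (lcs_succ_eq n).symm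
    have hmapC : C.map q.rangeRestrict = B := lcs_map_surj _ hqr n
    have hmapA : A.map q.rangeRestrict = B := by
      rw [hA, lcs_map_surj _ hqr, hTstab]
    have hmapA' : A'.map q.rangeRestrict = B := by
      rw [hA', Subgroup.map_commutator, hmapA, ihB]
    have hCsup : C ≤ A' ⊔ q.ker := by
      have h1 : C.map q.rangeRestrict ≤ A'.map q.rangeRestrict := by
        rw [hmapC, hmapA']
      have := le_sup_ker q.rangeRestrict h1
      rwa [MonoidHom.ker_rangeRestrict] at this
    -- the final computation
    have hfinal : A ≤ A' := by
      rw [hA, lcs_succ_eq]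
      refine Subgroup.commutator_le.mpr fun c hc s _ => ?_
      have hcm : (c : ↥S) ∈ (A' : Set ↥S) * (q.ker : Set ↥S) := by
        rw [← Subgroup.mul_normal]
        exact hCsup hc
      obtain ⟨a', ha', k, hk, rfl⟩ := hcm
      have hid : ⁅a' * k, s⁆ = a' * ⁅k, s⁆ * a'⁻¹ * ⁅a', s⁆ := by group
      rw [hid]
      have h1 : ⁅k, s⁆ ∈ A' :=
        hLA' (Subgroup.commutator_mem_commutator hk (Subgroup.mem_top s))
      have h2 : ⁅a', s⁆ ∈ A' :=
        Subgroup.commutator_le_left A' ⊤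
          (Subgroup.commutator_mem_commutator ha' (Subgroup.mem_top s))
      exact A'.mul_mem (hA'n.conj_mem _ h1 a') h2
    exact le_antisymm (Subgroup.commutator_le_left A A) hfinal

/-- **Corollary 1.** Let `S` be a subdirect subgroup of a product of perfect groups
`G₁ × ⋯ × Gₙ` and `N` a normal subgroup of `S` with `S/N` solvable. Then
`γₙ(S) ≤ N` (here `γₖ(S)` is `lowerCentralSeries S (k-1)`), so `S/N` is nilpotent
of class at most `n - 1`. -/
theorem gamma_le_of_subdirect_perfect_solvable_quotient
    {n : ℕ} (hn : 0 < n) (G : Fin n → Type*) [∀ i, Group (G i)]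
    (hperf : ∀ i, ⁅(⊤ : Subgroup (G i)), (⊤ : Subgroup (G i))⁆ = ⊤)
    (S : Subgroup (∀ i, G i)) (N : Subgroup ↥S) [N.Normal]
    (hS : ∀ i : Fin n, Function.Surjective (fun s : ↥S => (s : ∀ j, G j) i))
    (hsolv : IsSolvable (↥S ⧸ N)) :
    (⊤ : Subgroup ↥S).lowerCentralSeries (n - 1) ≤ N := by
  obtain ⟨m, rfl⟩ : ∃ m, n = m + 1 := ⟨n - 1, (Nat.succ_pred_eq_of_pos hn).symm⟩
  have hperfP := perfect_lcs m G hperf S hS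
  simp only [Nat.add_sub_cancel]
  set P := (⊤ : Subgroup ↥S).lowerCentralSeries m with hP
  let π := QuotientGroup.mk' N
  have hmap : ∀ j, P.map π ≤ derivedSeries (↥S ⧸ N) j := by
    intro j
    induction j with
    | zero => exact le_top
    | succ j ihj =>
        calc P.map π = (⁅P, P⁆).map π := by rw [hperfP]
          _ = ⁅P.map π, P.map π⁆ := Subgroup.map_commutator P P π
          _ ≤ ⁅derivedSeries (↥S ⧸ N) j, derivedSeries (↥S ⧸ N) j⁆ :=
              Subgroup.commutator_mono ihj ihj
          _ = derivedSeries (↥S ⧸ N) (j + 1) := (derivedSeries_succ _ j).symm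
  obtain ⟨k, hk⟩ := hsolv.solvable
  have hbot : P.map π ≤ ⊥ := hk ▸ hmap k
  intro x hx
  have hx1 := hbot (Subgroup.mem_map_of_mem π hx)
  rw [Subgroup.mem_bot] at hx1
  have hker : x ∈ π.ker := MonoidHom.mem_ker.mpr hx1
  rwa [QuotientGroup.ker_mk'] at hker
end

section
/- Let $G$ be a group and $N$ a normal subgroup of $G$. Then for every $m\geq 0$ and every $l\geq 1$, the commutator subgroup $[[G,{}^mN],\gamma_l(N)]$ is contained in $[G,{}^{m+l}N]$. -/
/-- The left-normed iterated commutator subgroup `[G, ᵐN]`: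
`[G, ⁰N] = G` (i.e. `⊤`) and `[G, ᵐ⁺¹N] = [[G, ᵐN], N]`. -/
def iterComm {G : Type*} [Group G] (N : Subgroup G) : ℕ → Subgroup G
  | 0 => ⊤
  | m + 1 => ⁅iterComm N m, N⁆

/-- The lower central series of a (normal) subgroup `N`, as subgroups of the ambient
group: `γ₁(N) = N` is `gammaN N 0`, and `γ_{l+1}(N) = [γ_l(N), N]` is `gammaN N l`. -/
def gammaN {G : Type*} [Group G] (N : Subgroup G) : ℕ → Subgroup G
  | 0 => N
  | l + 1 => ⁅gammaN N l, N⁆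

lemma iterComm_normal {G : Type*} [Group G] (N : Subgroup G) [N.Normal] :
    ∀ m, (iterComm N m).Normal
  | 0 => inferInstanceAs (⊤ : Subgroup G).Normal
  | m + 1 => by
      haveI := iterComm_normal N m
      exact Subgroup.commutator_normal _ _

/-- Three subgroups lemma, relative to a normal subgroup `K`. -/
lemma three_subgroups_le {G : Type*} [Group G] {K : Subgroup G} [K.Normal]
    (A B C : Subgroup G) (h1 : ⁅⁅B, C⁆, A⁆ ≤ K) (h2 : ⁅⁅C, A⁆, B⁆ ≤ K) :
    ⁅⁅A, B⁆, C⁆ ≤ K := by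
  let f := QuotientGroup.mk' K
  have hker : f.ker = K := QuotientGroup.ker_mk' K
  have tobot : ∀ X Y Z : Subgroup G, ⁅⁅X, Y⁆, Z⁆ ≤ K →
      ⁅⁅X.map f, Y.map f⁆, Z.map f⁆ = ⊥ := by
    intro X Y Z h
    rw [← Subgroup.map_commutator, ← Subgroup.map_commutator,
      Subgroup.map_eq_bot_iff, hker]
    exact h
  have := Subgroup.commutator_commutator_eq_bot_of_rotate
    (tobot B C A h1) (tobot C A B h2)
  rw [← Subgroup.map_commutator, ← Subgroup.map_commutator,
    Subgroup.map_eq_bot_iff, hker] at this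
  exact this

/-- **[C2].** For a normal subgroup `N` of `G`, all `m ≥ 0` and `l ≥ 1`:
`[[G, ᵐN], γ_l(N)] ≤ [G, ᵐ⁺ˡN]`. -/
theorem commutator_iterComm_gammaN_le
    {G : Type*} [Group G] (N : Subgroup G) [N.Normal] (m l : ℕ) (hl : 1 ≤ l) :
    ⁅iterComm N m, gammaN N (l - 1)⁆ ≤ iterComm N (m + l) := by
  obtain ⟨k, rfl⟩ : ∃ k, l = k + 1 := ⟨l - 1, (Nat.succ_pred_eq_of_pos hl).symm⟩
  simp only [Nat.add_sub_cancel]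
  clear hl
  induction k generalizing m with
  | zero => exact le_of_eq rfl
  | succ k ih =>
    haveI := iterComm_normal N (m + (k + 1) + 1)
    have key : ⁅⁅gammaN N k, N⁆, iterComm N m⁆ ≤ iterComm N (m + (k + 1) + 1) := by
      apply three_subgroups_le
      · -- ⁅⁅N, iterComm N m⁆, gammaN N k⁆ ≤ _
        rw [Subgroup.commutator_comm N (iterComm N m)]
        have : ⁅iterComm N (m + 1), gammaN N k⁆ ≤ iterComm N (m + 1 + (k + 1)) := ih (m + 1)
        calc ⁅(⁅iterComm N m, N⁆), gammaN N k⁆ = ⁅iterComm N (m + 1), gammaN N k⁆ := rfl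
          _ ≤ iterComm N (m + 1 + (k + 1)) := this
          _ = iterComm N (m + (k + 1) + 1) := by ring_nf
      · -- ⁅⁅iterComm N m, gammaN N k⁆, N⁆ ≤ _
        calc ⁅(⁅iterComm N m, gammaN N k⁆), N⁆
            ≤ ⁅iterComm N (m + (k + 1)), N⁆ :=
              Subgroup.commutator_mono (ih m) le_rfl
          _ = iterComm N (m + (k + 1) + 1) := rfl
    calc ⁅iterComm N m, gammaN N (k + 1)⁆
        = ⁅(⁅gammaN N k, N⁆), iterComm N m⁆ := Subgroup.commutator_comm _ _
      _ ≤ iterComm N (m + (k + 1) + 1) := key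
      _ = iterComm N (m + (k + 2)) := by ring_nf
end

section
/- Let $G$ be a group, $d\in\mathbb{N}$, and let $K,L$ be normal subgroups of $G$. Then for all subsets $A,B\subseteq\{1,\dots,d\}$, the commutator of the subgroups $\Delta_A(K)$ and $\Delta_B(L)$ of $G^{\mathcal{P}([d])}$ equals $\Delta_{A\cup B}([K,L])$. -/
/-- The homomorphism `Δ_A : G → G^(𝒫[d])`, where `Δ_A(u)(B) = u` if `A ⊆ B` and `1`
otherwise. Coordinates of the direct power are indexed by `Finset (Fin d)`. -/
def Delta {G : Type*} [Group G] (d : ℕ) (A : Finset (Fin d)) :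
    G →* (Finset (Fin d) → G) where
  toFun u := fun B => if A ⊆ B then u else 1
  map_one' := by funext B; simp
  map_mul' u v := by
    funext B
    by_cases h : A ⊆ B <;> simp [Pi.mul_apply, h]

open scoped commutatorElement

/-- **Lemma (DC).** For normal subgroups `K, L ⊴ G` and `A, B ⊆ [d]`:
`[Δ_A(K), Δ_B(L)] = Δ_{A ∪ B}([K, L])`. -/
theorem commutator_Delta_eq
    {G : Type*} [Group G] {d : ℕ} (hd : 0 < d) (K L : Subgroup G)
    [K.Normal] [L.Normal] (A B : Finset (Fin d)) :
    ⁅K.map (Delta d A), L.map (Delta d B)⁆ = ⁅K, L⁆.map (Delta d (A ∪ B)) := by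
  have key : ∀ (A B : Finset (Fin d)) (u v : G),
      ⁅Delta d A u, Delta d B v⁆ = Delta (G := G) d (A ∪ B) ⁅u, v⁆ := by
    intro A B u v
    funext C
    simp only [commutatorElement_def, Delta, MonoidHom.coe_mk, OneHom.coe_mk,
      Pi.mul_apply, Pi.inv_apply, Finset.union_subset_iff]
    by_cases hA : A ⊆ C <;> by_cases hB : B ⊆ C <;> simp [hA, hB]
  apply le_antisymm
  · rw [Subgroup.commutator_le]
    rintro _ ⟨u, hu, rfl⟩ _ ⟨v, hv, rfl⟩
    rw [key]
    exact Subgroup.mem_map_of_mem _ (Subgroup.commutator_mem_commutator hu hv)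
  · rw [Subgroup.map_commutator, Subgroup.commutator_le]
    rintro _ ⟨u, hu, rfl⟩ _ ⟨v, hv, rfl⟩
    rw [key, Finset.union_self]
    rw [← key A B u v]
    exact Subgroup.commutator_mem_commutator
      (Subgroup.mem_map_of_mem _ hu) (Subgroup.mem_map_of_mem _ hv)
end

section
/- Let $G$ be a perfect group, $d\in\mathbb{N}$, and $N$ a normal subgroup of $G$ such that $\gamma_d(N)$ strictly contains $[G,{}^dN]$. Then $S=\Gamma_1(G,N)$ is a subgroup of $G^{\mathcal{P}([d])}\cong G^{2^d}$ whose projection to each coordinate is surjective, and $\gamma_d(S)$ strictly contains $\gamma_{d+1}(S)$; in particular $S/\gamma_{d+1}(S)$ is nilpotent of class exactly $d$. -/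
/-- The subgroup `Γ_k(G,N)` of `G^(𝒫[d])`, generated by the `Δ_A([G, ^{|A|}N])` with
`|A| < k` together with the `Δ_A(γ_{|A|}(N))` with `|A| ≥ k`. -/
def GammaSub {G : Type*} [Group G] (d : ℕ) (N : Subgroup G) (k : ℕ) :
    Subgroup (Finset (Fin d) → G) :=
  ⨆ A : Finset (Fin d),
    if A.card < k then (iterComm N A.card).map (Delta d A)
    else (gammaN N (A.card - 1)).map (Delta d A)



section GSide
variable {G : Type*} [Group G] (N : Subgroup G) [hN : N.Normal]
set_option linter.unusedSectionVars false

/-- three subgroups lemma, `≤ L` version -/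
theorem tsl {A B C L : Subgroup G} (hL : L.Normal)
    (h1 : ⁅⁅B, C⁆, A⁆ ≤ L) (h2 : ⁅⁅C, A⁆, B⁆ ≤ L) : ⁅⁅A, B⁆, C⁆ ≤ L := by
  let f := QuotientGroup.mk' L
  have key : ∀ X Y Z : Subgroup G, ⁅⁅X, Y⁆, Z⁆ ≤ L ↔ ⁅⁅X.map f, Y.map f⁆, Z.map f⁆ = ⊥ := by
    intro X Y Z
    rw [← Subgroup.map_commutator, ← Subgroup.map_commutator, Subgroup.map_eq_bot_iff,
      QuotientGroup.ker_mk']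
  rw [key] at h1 h2 ⊢
  exact Subgroup.commutator_commutator_eq_bot_of_rotate h1 h2

instance iterComm_normal_s8 : ∀ m, (iterComm N m).Normal
  | 0 => show (⊤ : Subgroup G).Normal from inferInstance
  | m + 1 => by
      have := iterComm_normal_s8 m
      exact Subgroup.commutator_normal _ _

instance gammaN_normal : ∀ l, (gammaN N l).Normal
  | 0 => hN
  | l + 1 => by
      have := gammaN_normal l
      exact Subgroup.commutator_normal _ _

theorem iterComm_succ_le : ∀ m, iterComm N (m + 1) ≤ iterComm N m
  | 0 => le_top
  | m + 1 => Subgroup.commutator_mono (iterComm_succ_le m) le_rfl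

theorem iterComm_antitone : Antitone (iterComm N) :=
  antitone_nat_of_succ_le (iterComm_succ_le N)

theorem gammaN_succ_le : ∀ l, gammaN N (l + 1) ≤ gammaN N l
  | 0 => Subgroup.commutator_le_left _ _
  | l + 1 => Subgroup.commutator_mono (gammaN_succ_le l) le_rfl

theorem gammaN_antitone : Antitone (gammaN N) :=
  antitone_nat_of_succ_le (gammaN_succ_le N)

theorem gammaN_le_iterComm : ∀ l, gammaN N l ≤ iterComm N l
  | 0 => le_top
  | l + 1 => Subgroup.commutator_mono (gammaN_le_iterComm l) le_rfl

theorem iterComm_succ_le_gammaN : ∀ m, iterComm N (m + 1) ≤ gammaN N m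
  | 0 => Subgroup.commutator_le_right _ _
  | m + 1 => Subgroup.commutator_mono (iterComm_succ_le_gammaN m) le_rfl

/-- L1 -/
theorem comm_iterComm_gammaN : ∀ b a, ⁅iterComm N a, gammaN N b⁆ ≤ iterComm N (a + b + 1)
  | 0, a => le_of_eq rfl
  | b + 1, a => by
      show ⁅iterComm N a, ⁅gammaN N b, N⁆⁆ ≤ iterComm N (a + (b + 1) + 1)
      rw [Subgroup.commutator_comm]
      refine tsl inferInstance ?_ ?_
      · rw [Subgroup.commutator_comm N (iterComm N a)]
        calc ⁅(⁅iterComm N a, N⁆ : Subgroup G), gammaN N b⁆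
            = ⁅iterComm N (a + 1), gammaN N b⁆ := rfl
          _ ≤ iterComm N (a + 1 + b + 1) := comm_iterComm_gammaN b (a + 1)
          _ ≤ iterComm N (a + (b + 1) + 1) := le_of_eq (by ring_nf)
      · calc ⁅(⁅iterComm N a, gammaN N b⁆ : Subgroup G), N⁆
            ≤ ⁅iterComm N (a + b + 1), N⁆ :=
              Subgroup.commutator_mono (comm_iterComm_gammaN b a) le_rfl
          _ = iterComm N (a + b + 2) := rfl
          _ ≤ iterComm N (a + (b + 1) + 1) := le_of_eq (by ring_nf)

/-- L2 -/
theorem comm_iterComm_gammaN' : ∀ a b, ⁅iterComm N a, gammaN N b⁆ ≤ gammaN N (a + b)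
  | 0, b => by
      show ⁅(⊤ : Subgroup G), gammaN N b⁆ ≤ gammaN N (0 + b)
      rw [Subgroup.commutator_comm, Nat.zero_add]
      exact Subgroup.commutator_le_left _ _
  | a + 1, b => by
      show ⁅⁅iterComm N a, N⁆, gammaN N b⁆ ≤ gammaN N (a + 1 + b)
      refine tsl inferInstance ?_ ?_
      · rw [Subgroup.commutator_comm N (gammaN N b)]
        calc ⁅(⁅gammaN N b, N⁆ : Subgroup G), iterComm N a⁆
            = ⁅gammaN N (b + 1), iterComm N a⁆ := rfl
          _ = ⁅iterComm N a, gammaN N (b + 1)⁆ := Subgroup.commutator_comm _ _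
          _ ≤ gammaN N (a + (b + 1)) := comm_iterComm_gammaN' a (b + 1)
          _ = gammaN N (a + 1 + b) := by ring_nf
      · calc ⁅(⁅gammaN N b, iterComm N a⁆ : Subgroup G), N⁆
            = ⁅⁅iterComm N a, gammaN N b⁆, N⁆ := by rw [Subgroup.commutator_comm (gammaN N b)]
          _ ≤ ⁅gammaN N (a + b), N⁆ :=
              Subgroup.commutator_mono (comm_iterComm_gammaN' a b) le_rfl
          _ = gammaN N (a + b + 1) := rfl
          _ = gammaN N (a + 1 + b) := by ring_nf

/-- L3 -/
theorem comm_gammaN_top : ∀ l, ⁅gammaN N l, (⊤ : Subgroup G)⁆ ≤ iterComm N (l + 1)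
  | 0 => by
      rw [Subgroup.commutator_comm]
      exact le_of_eq rfl
  | l + 1 => by
      show ⁅⁅gammaN N l, N⁆, ⊤⁆ ≤ iterComm N (l + 2)
      refine tsl inferInstance ?_ ?_
      · calc ⁅(⁅N, (⊤ : Subgroup G)⁆ : Subgroup G), gammaN N l⁆
            = ⁅⁅(⊤ : Subgroup G), N⁆, gammaN N l⁆ := by rw [Subgroup.commutator_comm N]
          _ = ⁅iterComm N 1, gammaN N l⁆ := rfl
          _ ≤ iterComm N (1 + l + 1) := comm_iterComm_gammaN N l 1
          _ = iterComm N (l + 2) := by ring_nf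
      · calc ⁅(⁅(⊤ : Subgroup G), gammaN N l⁆ : Subgroup G), N⁆
            = ⁅⁅gammaN N l, ⊤⁆, N⁆ := by
              rw [Subgroup.commutator_comm (⊤ : Subgroup G) (gammaN N l)]
          _ ≤ ⁅iterComm N (l + 1), N⁆ := Subgroup.commutator_mono (comm_gammaN_top l) le_rfl
          _ = iterComm N (l + 2) := rfl

/-- L5 -/
theorem comm_gammaN_gammaN : ∀ j i, ⁅gammaN N i, gammaN N j⁆ ≤ gammaN N (i + j + 1)
  | 0, i => le_of_eq rfl
  | j + 1, i => by
      show ⁅gammaN N i, ⁅gammaN N j, N⁆⁆ ≤ gammaN N (i + (j + 1) + 1)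
      rw [Subgroup.commutator_comm]
      refine tsl inferInstance ?_ ?_
      · calc ⁅(⁅N, gammaN N i⁆ : Subgroup G), gammaN N j⁆
            = ⁅⁅gammaN N i, N⁆, gammaN N j⁆ := by rw [Subgroup.commutator_comm N]
          _ = ⁅gammaN N (i + 1), gammaN N j⁆ := rfl
          _ ≤ gammaN N (i + 1 + j + 1) := comm_gammaN_gammaN j (i + 1)
          _ = gammaN N (i + (j + 1) + 1) := by ring_nf
      · calc ⁅(⁅gammaN N i, gammaN N j⁆ : Subgroup G), N⁆
            ≤ ⁅gammaN N (i + j + 1), N⁆ :=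
              Subgroup.commutator_mono (comm_gammaN_gammaN j i) le_rfl
          _ = gammaN N (i + j + 2) := rfl
          _ = gammaN N (i + (j + 1) + 1) := by ring_nf

/-- L4 -/
theorem comm_iterComm_iterComm (a b : ℕ) (hb : 1 ≤ b) :
    ⁅iterComm N a, iterComm N b⁆ ≤ iterComm N (a + b) := by
  obtain ⟨b, rfl⟩ := Nat.exists_eq_add_of_le hb
  calc ⁅iterComm N a, iterComm N (1 + b)⁆
      ≤ ⁅iterComm N a, gammaN N b⁆ := by
        refine Subgroup.commutator_mono le_rfl ?_
        rw [Nat.add_comm 1 b]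
        exact iterComm_succ_le_gammaN N b
    _ ≤ iterComm N (a + b + 1) := comm_iterComm_gammaN N b a
    _ = iterComm N (a + (1 + b)) := by ring_nf

end GSide

section GSide2
variable {G : Type*} [Group G] (N : Subgroup G) [hN : N.Normal]
set_option linter.unusedSectionVars false

/-- the `A`-component of `GammaSub _ N k` for `|A| = a`. -/
def compFn (k a : ℕ) : Subgroup G :=
  if a < k then iterComm N a else gammaN N (a - 1)

theorem compFn_of_lt {k a : ℕ} (h : a < k) : compFn N k a = iterComm N a := if_pos h
theorem compFn_of_ge {k a : ℕ} (h : ¬ a < k) : compFn N k a = gammaN N (a - 1) := if_neg h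

theorem le_compFn {x : Subgroup G} {k c : ℕ} (h1 : c < k → x ≤ iterComm N c)
    (h2 : k ≤ c → x ≤ gammaN N (c - 1)) : x ≤ compFn N k c := by
  unfold compFn; split
  · exact h1 ‹_›
  · exact h2 (by omega)

theorem iterComm_le_gammaN_pred {a : ℕ} (ha : 1 ≤ a) :
    iterComm N a ≤ gammaN N (a - 1) := by
  obtain ⟨b, rfl⟩ := Nat.exists_eq_add_of_le ha
  rw [Nat.add_comm 1 b]
  simpa using iterComm_succ_le_gammaN N b

/-- key case computation for `⁅Γ_k, Γ_1⁆ ≤ Γ_{k+1}`. -/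
theorem comm_compFn_case2 {k a a' c : ℕ} (hk : 1 ≤ k) (h1 : a ≤ c) (h2 : a' ≤ c)
    (h3 : c ≤ a + a') : ⁅compFn N k a, compFn N 1 a'⁆ ≤ compFn N (k + 1) c := by
  rcases Nat.eq_zero_or_pos a' with rfl | ha'
  · -- a' = 0, c = a
    have hc : c = a := by omega
    subst hc
    rw [compFn_of_lt N (by omega : (0:ℕ) < 1)]
    by_cases hak : c < k
    · rw [compFn_of_lt N hak]
      refine le_compFn N (fun _ => ?_) (fun h => absurd h (by omega))
      show ⁅iterComm N c, iterComm N 0⁆ ≤ iterComm N c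
      exact Subgroup.commutator_le_left _ _
    · rw [compFn_of_ge N hak]
      have hc1 : 1 ≤ c := by omega
      have hD : ⁅gammaN N (c - 1), (⊤ : Subgroup G)⁆ ≤ iterComm N c := by
        have := comm_gammaN_top N (c - 1)
        rwa [show c - 1 + 1 = c by omega] at this
      refine le_compFn N (fun h => ?_) (fun h => ?_)
      · exact hD
      · exact hD.trans (iterComm_le_gammaN_pred N hc1)
  · -- a' ≥ 1
    rw [compFn_of_ge N (by omega : ¬ a' < 1)]
    by_cases hak : a < k
    · rw [compFn_of_lt N hak]
      refine le_compFn N (fun h => ?_) (fun h => ?_)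
      · calc ⁅iterComm N a, gammaN N (a' - 1)⁆
            ≤ iterComm N (a + (a' - 1) + 1) := comm_iterComm_gammaN N _ _
          _ ≤ iterComm N c := iterComm_antitone N (by omega)
      · calc ⁅iterComm N a, gammaN N (a' - 1)⁆
            ≤ gammaN N (a + (a' - 1)) := comm_iterComm_gammaN' N _ _
          _ ≤ gammaN N (c - 1) := gammaN_antitone N (by omega)
    · rw [compFn_of_ge N hak]
      have hC : ⁅gammaN N (a - 1), gammaN N (a' - 1)⁆ ≤ gammaN N (a + a' - 1) := by
        have := comm_gammaN_gammaN N (a' - 1) (a - 1)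
        have e : a - 1 + (a' - 1) + 1 = a + a' - 1 := by omega
        rwa [e] at this
      refine le_compFn N (fun h => ?_) (fun h => ?_)
      · calc ⁅gammaN N (a - 1), gammaN N (a' - 1)⁆
            ≤ gammaN N (a + a' - 1) := hC
          _ ≤ iterComm N (a + a' - 1) := gammaN_le_iterComm N _
          _ ≤ iterComm N c := iterComm_antitone N (by omega)
      · exact hC.trans (gammaN_antitone N (by omega))

/-- key case computation for normalization of `Γ_p` by `Γ_q`, `1 ≤ q ≤ p`. -/
theorem comm_compFn_master {p q a a' c : ℕ} (hq : 1 ≤ q) (hqp : q ≤ p)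
    (h1 : a ≤ c) (h2 : a' ≤ c) (h3 : c ≤ a + a') :
    ⁅compFn N q a', compFn N p a⁆ ≤ compFn N p c := by
  by_cases ha' : a' < q
  · rw [compFn_of_lt N ha']
    by_cases ha : a < p
    · rw [compFn_of_lt N ha]
      rcases Nat.eq_zero_or_pos a with rfl | hapos
      · have hc : c = a' := by omega
        subst hc
        refine le_compFn N (fun h => ?_) (fun h => absurd h (by omega))
        show ⁅iterComm N c, iterComm N 0⁆ ≤ iterComm N c
        exact Subgroup.commutator_le_left _ _
      · have hE : ⁅iterComm N a', iterComm N a⁆ ≤ iterComm N (a' + a) :=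
          comm_iterComm_iterComm N a' a hapos
        refine le_compFn N (fun h => ?_) (fun h => ?_)
        · exact hE.trans (iterComm_antitone N (by omega))
        · exact hE.trans ((iterComm_le_gammaN_pred N (by omega)).trans
            (gammaN_antitone N (by omega)))
    · rw [compFn_of_ge N ha]
      refine le_compFn N (fun h => absurd h (by omega)) (fun h => ?_)
      calc ⁅iterComm N a', gammaN N (a - 1)⁆
          ≤ gammaN N (a' + (a - 1)) := comm_iterComm_gammaN' N _ _
        _ ≤ gammaN N (c - 1) := gammaN_antitone N (by omega)
  · rw [compFn_of_ge N ha']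
    by_cases ha : a < p
    · rw [compFn_of_lt N ha]
      rw [Subgroup.commutator_comm]
      refine le_compFn N (fun h => ?_) (fun h => ?_)
      · calc ⁅iterComm N a, gammaN N (a' - 1)⁆
            ≤ iterComm N (a + (a' - 1) + 1) := comm_iterComm_gammaN N _ _
          _ ≤ iterComm N c := iterComm_antitone N (by omega)
      · calc ⁅iterComm N a, gammaN N (a' - 1)⁆
            ≤ gammaN N (a + (a' - 1)) := comm_iterComm_gammaN' N _ _
          _ ≤ gammaN N (c - 1) := gammaN_antitone N (by omega)
    · rw [compFn_of_ge N ha]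
      refine le_compFn N (fun h => absurd h (by omega)) (fun h => ?_)
      calc ⁅gammaN N (a' - 1), gammaN N (a - 1)⁆
          ≤ gammaN N ((a' - 1) + (a - 1) + 1) := comm_gammaN_gammaN N _ _
        _ ≤ gammaN N (c - 1) := gammaN_antitone N (by omega)

/-- U-side component computation. -/
theorem comm_iterComm_max {k₁ k₂ a a' c : ℕ} (hk₁ : 1 ≤ k₁) (hk₂ : 1 ≤ k₂)
    (h1 : a ≤ c) (h2 : a' ≤ c) (h3 : c ≤ a + a') {m : ℕ} (hm : m ≤ k₁ + k₂) (hmc : m ≤ c ∨ True) :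
    ⁅iterComm N (max a' k₁), iterComm N (max a k₂)⁆ ≤ iterComm N (max c m) := by
  calc ⁅iterComm N (max a' k₁), iterComm N (max a k₂)⁆
      ≤ iterComm N (max a' k₁ + max a k₂) := comm_iterComm_iterComm N _ _ (by omega)
    _ ≤ iterComm N (max c m) := iterComm_antitone N (by omega)

end GSide2

open scoped commutatorElement

section Helpers
variable {P : Type*} [Group P]

theorem conj_mem_of_mem_normalizer {L : Subgroup P} {x h : P}
    (hx : x ∈ (Subgroup.normalizer L)) (hh : h ∈ L) : x * h * x⁻¹ ∈ L :=
  (Subgroup.mem_normalizer_iff.mp hx h).mp hh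

/-- normalizer criterion for a supremum of subgroups -/
theorem mem_normalizer_iSup {ι : Sort*} (S : ι → Subgroup P) {g : P}
    (hg : ∀ i, ∀ x ∈ S i, g * x * g⁻¹ ∈ ⨆ j, S j)
    (hg' : ∀ i, ∀ x ∈ S i, g⁻¹ * x * g ∈ ⨆ j, S j) :
    g ∈ Subgroup.normalizer (⨆ j, S j : Subgroup P) := by
  have fwd : ∀ (a : P), (∀ i, ∀ x ∈ S i, a * x * a⁻¹ ∈ ⨆ j, S j) →
      ∀ h ∈ ⨆ j, S j, a * h * a⁻¹ ∈ ⨆ j, S j := by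
    intro a ha h hh
    refine Subgroup.iSup_induction S (C := fun h => a * h * a⁻¹ ∈ ⨆ j, S j) hh
      (fun i x hx => ha i x hx) (by simpa using one_mem _) ?_
    intro x y hx hy
    have : a * (x * y) * a⁻¹ = (a * x * a⁻¹) * (a * y * a⁻¹) := by group
    rw [this]; exact mul_mem hx hy
  rw [Subgroup.mem_normalizer_iff]
  intro h
  constructor
  · exact fun hh => fwd g hg h hh
  · intro hh
    have := fwd g⁻¹ (by simpa using hg') _ hh
    simpa [mul_assoc] using this

/-- commutator of suprema bound, given normalization -/
theorem commutator_iSup_le {ι κ : Sort*} (S : ι → Subgroup P) (T : κ → Subgroup P)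
    (L : Subgroup P) (hS : (⨆ i, S i) ≤ (Subgroup.normalizer L)) (hT : (⨆ j, T j) ≤ (Subgroup.normalizer L))
    (h : ∀ i j, ∀ x ∈ S i, ∀ y ∈ T j, ⁅x, y⁆ ∈ L) :
    ⁅⨆ i, S i, ⨆ j, T j⁆ ≤ L := by
  rw [Subgroup.commutator_le]
  intro x hx
  induction hx using Subgroup.iSup_induction' with
  | hp i x hxi =>
      intro y hy
      induction hy using Subgroup.iSup_induction' with
      | hp j y hyj => exact h i j x hxi y hyj
      | h1 => simpa using one_mem L
      | hmul y z hy hz ihy ihz =>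
          have hyn : y ∈ (Subgroup.normalizer L) := hT hy
          have : ⁅x, y * z⁆ = ⁅x, y⁆ * (y * ⁅x, z⁆ * y⁻¹) := by
            simp only [commutatorElement_def]; group
          rw [this]
          exact mul_mem ihy (conj_mem_of_mem_normalizer hyn ihz)
  | h1 =>
      intro y hy; simpa using one_mem L
  | hmul x z hx hz ihx ihz =>
      intro y hy
      have hxn : x ∈ (Subgroup.normalizer L) := hS hx
      have : ⁅x * z, y⁆ = (x * ⁅z, y⁆ * x⁻¹) * ⁅x, y⁆ := by
        simp only [commutatorElement_def]; group
      rw [this]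
      exact mul_mem (conj_mem_of_mem_normalizer hxn (ihz y hy)) (ihx y hy)

theorem conj_commutator_mem {K H : Subgroup P} (hK : H ≤ (Subgroup.normalizer K)) {s : P} (hs : s ∈ H)
    {h : P} (hh : h ∈ ⁅K, H⁆) : s * h * s⁻¹ ∈ ⁅K, H⁆ := by
  rw [Subgroup.commutator_def] at hh
  induction hh using Subgroup.closure_induction with
  | mem x hx =>
      obtain ⟨k, hk, t, ht, rfl⟩ := hx
      have : s * ⁅k, t⁆ * s⁻¹ = ⁅s * k * s⁻¹, s * t * s⁻¹⁆ := conjugate_commutatorElement k t s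
      rw [this]
      exact Subgroup.commutator_mem_commutator
        (conj_mem_of_mem_normalizer (hK hs) hk) (H.mul_mem (H.mul_mem hs ht) (H.inv_mem hs))
  | one => simpa using one_mem _
  | mul x y hx hy ihx ihy =>
      have : s * (x * y) * s⁻¹ = (s * x * s⁻¹) * (s * y * s⁻¹) := by group
      rw [this]; exact mul_mem ihx ihy
  | inv x hx ihx =>
      have : s * x⁻¹ * s⁻¹ = (s * x * s⁻¹)⁻¹ := by group
      rw [this]; exact inv_mem ihx

theorem le_normalizer_commutator {K H : Subgroup P} (hK : H ≤ (Subgroup.normalizer K)) :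
    H ≤ Subgroup.normalizer (⁅K, H⁆ : Subgroup P) := by
  intro s hs
  rw [Subgroup.mem_normalizer_iff]
  intro h
  constructor
  · exact fun hh => conj_commutator_mem hK hs hh
  · intro hh
    have := conj_commutator_mem hK (H.inv_mem hs) hh
    simpa [mul_assoc] using this

/-- the lower central series of a subgroup is decreasing, and normalized by the subgroup -/
theorem le_normalizer_gammaN (H : Subgroup P) : ∀ l, H ≤ Subgroup.normalizer (gammaN H l)
  | 0 => Subgroup.le_normalizer
  | l + 1 => le_normalizer_commutator (le_normalizer_gammaN H l)

theorem gammaN_self_succ_le (H : Subgroup P) (l : ℕ) : gammaN H (l + 1) ≤ gammaN H l := by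
  show ⁅gammaN H l, H⁆ ≤ gammaN H l
  rw [Subgroup.commutator_le]
  intro x hx s hs
  have : ⁅x, s⁆ = x * (s * x⁻¹ * s⁻¹) := by group
  rw [this]
  exact mul_mem hx (conj_mem_of_mem_normalizer (le_normalizer_gammaN H l hs) (inv_mem hx))

/-- list collection: products of pointwise products agree modulo `D`. -/
theorem collect_list {ι : Type*} (l : List ι) (K D : Subgroup P)
    (hKD : ⁅K, K⁆ ≤ D) (hN : K ≤ (Subgroup.normalizer D)) (F Gf : ι → P)
    (hF : ∀ i, F i ∈ K) (hG : ∀ i, Gf i ∈ K) :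
    (l.map F).prod * (l.map Gf).prod * ((l.map fun i => F i * Gf i).prod)⁻¹ ∈ D := by
  induction l with
  | nil => simpa using one_mem D
  | cons a t ih =>
      have hP : (t.map F).prod ∈ K := list_prod_mem (by simpa using fun i _ => hF i)
      have hcomm : ⁅(t.map F).prod, Gf a⁆ ∈ D := hKD (Subgroup.commutator_mem_commutator hP (hG a))
      have key : (F a * (t.map F).prod) * (Gf a * (t.map Gf).prod) *
          ((F a * Gf a) * (t.map fun i => F i * Gf i).prod)⁻¹ =
          (F a * ⁅(t.map F).prod, Gf a⁆ * (F a)⁻¹) *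
            ((F a * Gf a) * ((t.map F).prod * (t.map Gf).prod * ((t.map fun i => F i * Gf i).prod)⁻¹) * (F a * Gf a)⁻¹) := by
        simp only [commutatorElement_def]; group
      simp only [List.map_cons, List.prod_cons]
      rw [key]
      refine mul_mem (conj_mem_of_mem_normalizer (hN (hF a)) hcomm) ?_
      exact conj_mem_of_mem_normalizer (hN (mul_mem (hF a) (hG a))) ih

theorem prod_map_eq_single {ι : Type*} [DecidableEq ι] {l : List ι} (hnd : l.Nodup)
    {i₀ : ι} (hi : i₀ ∈ l) (f : ι → P) (hf : ∀ i ∈ l, i ≠ i₀ → f i = 1) :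
    (l.map f).prod = f i₀ := by
  induction l with
  | nil => simp at hi
  | cons a t ih =>
      simp only [List.map_cons, List.prod_cons]
      rcases List.mem_cons.mp hi with rfl | hit
      · have : ∀ x ∈ t.map f, x = 1 := by
          rintro x hx
          obtain ⟨i, hit, rfl⟩ := List.mem_map.mp hx
          exact hf i (List.mem_cons_of_mem _ hit) (fun h => (List.nodup_cons.mp hnd).1 (h ▸ hit))
        rw [List.prod_eq_one this, mul_one]
      · rw [hf a (List.mem_cons_self) (fun h => (List.nodup_cons.mp hnd).1 (h ▸ hit)),
          one_mul]
        exact ih (List.nodup_cons.mp hnd).2 hit (fun i hi' hne => hf i (List.mem_cons_of_mem _ hi') hne)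

theorem extract_list {ι : Type*} {l : List ι} (hnd : l.Nodup) {i₀ : ι} (hi : i₀ ∈ l)
    (D : Subgroup P) (f : ι → P) (hf : ∀ i ∈ l, i ≠ i₀ → f i ∈ D)
    (hp : (l.map f).prod ∈ D) : f i₀ ∈ D := by
  induction l with
  | nil => simp at hi
  | cons a t ih =>
      simp only [List.map_cons, List.prod_cons] at hp
      rcases List.mem_cons.mp hi with rfl | hit
      · have ht : (t.map f).prod ∈ D := by
          refine list_prod_mem ?_
          rintro x hx
          obtain ⟨i, hitm, rfl⟩ := List.mem_map.mp hx
          exact hf i (List.mem_cons_of_mem _ hitm)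
            (fun h => (List.nodup_cons.mp hnd).1 (h ▸ hitm))
        have : f i₀ = f i₀ * (t.map f).prod * ((t.map f).prod)⁻¹ := by group
        rw [this]
        exact mul_mem hp (inv_mem ht)
      · have ha : f a ∈ D := hf a (List.mem_cons_self) (fun h => (List.nodup_cons.mp hnd).1 (h ▸ hit))
        refine ih (List.nodup_cons.mp hnd).2 hit (fun i hi' hne => hf i (List.mem_cons_of_mem _ hi') hne) ?_
        have : (t.map f).prod = (f a)⁻¹ * (f a * (t.map f).prod) := by group
        rw [this]
        exact mul_mem (inv_mem ha) hp

end Helpers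

section PiSide
variable {G : Type*} [Group G] (d : ℕ) (N : Subgroup G) [hN : N.Normal]
set_option linter.unusedSectionVars false

theorem Delta_apply (A B : Finset (Fin d)) (u : G) :
    Delta d A u B = if A ⊆ B then u else 1 := rfl

theorem Delta_comm (A₁ A₂ : Finset (Fin d)) (u v : G) :
    ⁅Delta d A₁ u, Delta d A₂ v⁆ = Delta d (A₁ ∪ A₂) ⁅u, v⁆ := by
  funext B
  simp only [commutatorElement_def, Pi.mul_apply, Pi.inv_apply, Delta_apply,
    Finset.union_subset_iff]
  by_cases h1 : A₁ ⊆ B <;> by_cases h2 : A₂ ⊆ B <;> simp [h1, h2]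

theorem Delta_conj (A₁ A₂ : Finset (Fin d)) (x y : G) :
    Delta d A₂ y * Delta d A₁ x * (Delta d A₂ y)⁻¹ =
      Delta d (A₂ ∪ A₁) ⁅y, x⁆ * Delta d A₁ x := by
  rw [← Delta_comm]
  simp only [commutatorElement_def]
  group

theorem Delta_diag_conj (A : Finset (Fin d)) (g y : G) :
    Delta d ∅ g * Delta d A y * (Delta d ∅ g)⁻¹ = Delta d A (g * y * g⁻¹) := by
  funext B
  simp only [Pi.mul_apply, Pi.inv_apply, Delta_apply, Finset.empty_subset, if_true]
  by_cases h : A ⊆ B <;> simp [h]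

/-- The auxiliary filtration `U_k`. -/
def UU (k : ℕ) : Subgroup (Finset (Fin d) → G) :=
  ⨆ A : Finset (Fin d), (iterComm N (max A.card k)).map (Delta d A)

theorem mem_UU_of {k : ℕ} (A : Finset (Fin d)) {x : G}
    (hx : x ∈ iterComm N (max A.card k)) : Delta d A x ∈ UU d N k :=
  le_iSup (fun A : Finset (Fin d) => (iterComm N (max A.card k)).map (Delta d A)) A
    (Subgroup.mem_map_of_mem _ hx)

theorem UU_coord {k : ℕ} {s : Finset (Fin d) → G} (hs : s ∈ UU d N k) (B : Finset (Fin d)) :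
    s B ∈ iterComm N k := by
  refine Subgroup.iSup_induction _ (C := fun s => s B ∈ iterComm N k) hs ?_ (by simpa using one_mem (iterComm N k)) ?_
  · rintro A x ⟨u, hu, rfl⟩
    rw [Delta_apply]
    split
    · exact iterComm_antitone N (le_max_right _ _) hu
    · exact one_mem _
  · intro x y hx hy
    exact mul_mem hx hy

theorem UU_le_normalizer (k m : ℕ) (hm : 1 ≤ m) :
    UU d N k ≤ Subgroup.normalizer (UU d N m) := by
  refine iSup_le fun A' => ?_
  rintro _ ⟨y, hy, rfl⟩
  have key : ∀ y' : G, y' ∈ iterComm N (max A'.card k) →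
      ∀ A : Finset (Fin d), ∀ x ∈ iterComm N (max A.card m),
      Delta d A' y' * Delta d A x * (Delta d A' y')⁻¹ ∈ UU d N m := by
    intro y' hy' A x hx
    rw [Delta_conj]
    refine mul_mem (mem_UU_of d N _ ?_) (mem_UU_of d N _ hx)
    have hcomm : ⁅y', x⁆ ∈ iterComm N (max A'.card k + max A.card m) :=
      comm_iterComm_iterComm N _ _ (by omega) (Subgroup.commutator_mem_commutator hy' hx)
    refine iterComm_antitone N ?_ hcomm
    have := Finset.card_union_le A' A
    omega
  refine mem_normalizer_iSup _ ?_ ?_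
  · rintro A _ ⟨x, hx, rfl⟩
    exact key y hy A x hx
  · rintro A _ ⟨x, hx, rfl⟩
    have : (Delta d A' y)⁻¹ = Delta d A' y⁻¹ := by rw [map_inv]
    rw [this, show Delta d A' y = (Delta d A' y⁻¹)⁻¹ by rw [map_inv, inv_inv]]
    exact key y⁻¹ (inv_mem hy) A x hx

theorem UU_comm_le (k : ℕ) (hk : 1 ≤ k) : ⁅UU d N k, UU d N k⁆ ≤ UU d N (k + 1) := by
  refine commutator_iSup_le _ _ _
    (UU_le_normalizer d N k (k+1) (by omega)) (UU_le_normalizer d N k (k+1) (by omega)) ?_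
  rintro A A' _ ⟨x, hx, rfl⟩ _ ⟨y, hy, rfl⟩
  rw [Delta_comm]
  refine mem_UU_of d N _ ?_
  have hcomm : ⁅x, y⁆ ∈ iterComm N (max A.card k + max A'.card k) :=
    comm_iterComm_iterComm N _ _ (by omega) (Subgroup.commutator_mem_commutator hx hy)
  refine iterComm_antitone N ?_ hcomm
  have := Finset.card_union_le A A'
  omega

end PiSide

section Collection
variable {G : Type*} [Group G] (d : ℕ) (N : Subgroup G) [hN : N.Normal]
set_option linter.unusedSectionVars false

noncomputable def setsList : List (Finset (Fin d)) := (Finset.univ : Finset (Finset (Fin d))).toList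

theorem setsList_nodup : (setsList d).Nodup := Finset.nodup_toList _
theorem mem_setsList (A : Finset (Fin d)) : A ∈ setsList d := by
  simp [setsList, Finset.mem_toList]

noncomputable def Lprod (z : Finset (Fin d) → G) : Finset (Fin d) → G :=
  ((setsList d).map (fun A => Delta d A (z A))).prod

theorem Lprod_mem {k : ℕ} {z : Finset (Fin d) → G}
    (hz : ∀ A, z A ∈ iterComm N (max A.card k)) : Lprod d z ∈ UU d N k :=
  list_prod_mem (by
    rintro x hx
    obtain ⟨A, _, rfl⟩ := List.mem_map.mp hx
    exact mem_UU_of d N A (hz A))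

theorem Lprod_coord (z : Finset (Fin d) → G) (B : Finset (Fin d)) :
    Lprod d z B = ((setsList d).map (fun A => if A ⊆ B then z A else 1)).prod := by
  have : Lprod d z B = Pi.evalMonoidHom (fun _ : Finset (Fin d) => G) B
      ((List.map (fun A => Delta d A (z A)) (setsList d)).prod) := rfl
  rw [this, map_list_prod, List.map_map]
  rfl

/-- membership in `UU k` admits a "collected" representation -/
theorem UU_collect {k : ℕ} (hk : 1 ≤ k) {s : Finset (Fin d) → G} (hs : s ∈ UU d N k) :
    ∃ z : Finset (Fin d) → G, (∀ A, z A ∈ iterComm N (max A.card k)) ∧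
      s * (Lprod d z)⁻¹ ∈ UU d N (k + 1) := by
  let V : Subgroup (Finset (Fin d) → G) := {
    carrier := {s | ∃ z : Finset (Fin d) → G, (∀ A, z A ∈ iterComm N (max A.card k)) ∧
      s * (Lprod d z)⁻¹ ∈ UU d N (k + 1)}
    one_mem' := by
      refine ⟨fun _ => 1, fun A => one_mem _, ?_⟩
      have h1 : Lprod d (fun _ => (1:G)) = 1 := by
        refine List.prod_eq_one ?_
        rintro x hx
        obtain ⟨A, _, rfl⟩ := List.mem_map.mp hx
        exact map_one (Delta d A)
      rw [h1]
      simpa using one_mem _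
    mul_mem' := by
      rintro s t ⟨z, hz, hu⟩ ⟨w, hw, hv⟩
      refine ⟨z * w, fun A => mul_mem (hz A) (hw A), ?_⟩
      have hpq : Lprod d z * Lprod d w * (Lprod d (z * w))⁻¹ ∈ UU d N (k + 1) := by
        have := collect_list (setsList d) (UU d N k) (UU d N (k+1))
          (UU_comm_le d N k hk) (UU_le_normalizer d N k (k+1) (by omega))
          (fun A => Delta d A (z A)) (fun A => Delta d A (w A))
          (fun A => mem_UU_of d N A (hz A)) (fun A => mem_UU_of d N A (hw A))
        have e : (List.map (fun A => Delta d A (z A) * Delta d A (w A)) (setsList d)) =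
            (List.map (fun A => Delta d A ((z * w) A)) (setsList d)) := by
          refine List.map_congr_left ?_
          intro A _
          rw [Pi.mul_apply, map_mul]
        rw [e] at this
        exact this
      have hzK : Lprod d z ∈ UU d N k := Lprod_mem d N hz
      have key : s * t * (Lprod d (z * w))⁻¹ =
          (s * (Lprod d z)⁻¹) *
          (Lprod d z * (t * (Lprod d w)⁻¹) * (Lprod d z)⁻¹) *
          (Lprod d z * Lprod d w * (Lprod d (z * w))⁻¹) := by group
      rw [key]
      exact mul_mem (mul_mem hu
        (conj_mem_of_mem_normalizer (UU_le_normalizer d N k (k+1) (by omega) hzK) hv)) hpq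
    inv_mem' := by
      rintro s ⟨z, hz, hu⟩
      refine ⟨z⁻¹, fun A => inv_mem (hz A), ?_⟩
      have hzK : Lprod d z ∈ UU d N k := Lprod_mem d N hz
      have hz'K : Lprod d z⁻¹ ∈ UU d N k := Lprod_mem d N (fun A => inv_mem (hz A))
      have hqp : Lprod d z⁻¹ * Lprod d z ∈ UU d N (k + 1) := by
        have := collect_list (setsList d) (UU d N k) (UU d N (k+1))
          (UU_comm_le d N k hk) (UU_le_normalizer d N k (k+1) (by omega))
          (fun A => Delta d A (z⁻¹ A)) (fun A => Delta d A (z A))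
          (fun A => mem_UU_of d N A (inv_mem (hz A))) (fun A => mem_UU_of d N A (hz A))
        have e : (List.map (fun A => Delta d A (z⁻¹ A) * Delta d A (z A)) (setsList d)) =
            (List.map (fun _ => (1 : Finset (Fin d) → G)) (setsList d)) := by
          refine List.map_congr_left ?_
          intro A _
          rw [Pi.inv_apply, ← map_mul]
          simp
        rw [e] at this
        have e2 : (List.map (fun _ : Finset (Fin d) => (1 : Finset (Fin d) → G)) (setsList d)).prod = 1 :=
          List.prod_eq_one (fun x hx => ((List.mem_map.mp hx).choose_spec.2).symm)
        rw [e2, inv_one, mul_one] at this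
        exact this
      have key : s⁻¹ * (Lprod d z⁻¹)⁻¹ =
          ((Lprod d z)⁻¹ * (s * (Lprod d z)⁻¹)⁻¹ * ((Lprod d z)⁻¹)⁻¹) *
          (Lprod d z⁻¹ * Lprod d z)⁻¹ := by group
      rw [key]
      exact mul_mem
        (conj_mem_of_mem_normalizer
          (Subgroup.normalizer _ |>.inv_mem (UU_le_normalizer d N k (k+1) (by omega) hzK))
          (inv_mem hu))
        (inv_mem hqp) }
  suffices h : UU d N k ≤ V by exact h hs
  refine iSup_le fun A => ?_
  rintro _ ⟨x, hx, rfl⟩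
  classical
  refine ⟨fun B => if B = A then x else 1, ?_, ?_⟩
  · intro B
    show (if B = A then x else 1) ∈ _
    split
    · subst ‹B = A›; exact hx
    · exact one_mem _
  · have h3 : Lprod d (fun B => if B = A then x else 1) = Delta d A x := by
      unfold Lprod
      have h4 := prod_map_eq_single (P := Finset (Fin d) → G) (setsList_nodup d) (mem_setsList d A)
        (fun B => Delta d B (if B = A then x else 1))
        (fun B _ hne => by
          show Delta d B (if B = A then x else 1) = 1
          rw [if_neg hne, map_one])
      rw [h4]
      show Delta d A (if A = A then x else 1) = Delta d A x
      rw [if_pos rfl]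
    rw [h3]
    simpa using one_mem _

end Collection

section Core
variable {G : Type*} [Group G] (d : ℕ) (N : Subgroup G) [hN : N.Normal]
set_option linter.unusedSectionVars false

theorem UU_core {k : ℕ} (hk : 1 ≤ k) (hkd : k + 1 ≤ d) {s : Finset (Fin d) → G}
    (hs : s ∈ UU d N k) (hr : ∀ B : Finset (Fin d), B ≠ Finset.univ → s B = 1) :
    s ∈ UU d N (k + 1) := by
  obtain ⟨z, hz, hu⟩ := UU_collect d N hk hs
  -- extract coordinates
  have hzB : ∀ n : ℕ, ∀ B : Finset (Fin d), B.card = n → B ≠ Finset.univ →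
      z B ∈ iterComm N (k + 1) := by
    intro n
    induction n using Nat.strong_induction_on with
    | _ n IH =>
      intro B hBcard hBne
      have hLB : Lprod d z B ∈ iterComm N (k + 1) := by
        have h1 : (s * (Lprod d z)⁻¹) B ∈ iterComm N (k + 1) := UU_coord d N hu B
        have h2 : (s * (Lprod d z)⁻¹) B = s B * (Lprod d z B)⁻¹ := rfl
        rw [h2, hr B hBne, one_mul] at h1
        simpa using inv_mem h1
      rw [Lprod_coord] at hLB
      have := extract_list (setsList_nodup d) (mem_setsList d B) (iterComm N (k + 1))
        (fun A => if A ⊆ B then z A else 1) ?_ hLB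
      · simpa using this
      · intro A _ hne
        show (if A ⊆ B then z A else 1) ∈ _
        split
        · rename_i hAB
          have hss : A ⊂ B := HasSubset.Subset.ssubset_of_ne hAB hne
          have hAne : A ≠ Finset.univ := by
            intro h
            subst h
            exact hne (Finset.univ_subset_iff.mp hAB).symm
          exact IH A.card (hBcard ▸ Finset.card_lt_card hss) A rfl hAne
        · exact one_mem _
  have hfac : ∀ A : Finset (Fin d), Delta d A (z A) ∈ UU d N (k + 1) := by
    intro A
    by_cases hA : A = Finset.univ
    · subst hA
      refine mem_UU_of d N _ ?_
      have : max (Finset.univ : Finset (Fin d)).card k = max (Finset.univ : Finset (Fin d)).card (k + 1) := by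
        have : (Finset.univ : Finset (Fin d)).card = d := by simp
        omega
      rw [← this]
      exact hz _
    · refine mem_UU_of d N _ ?_
      rcases le_or_gt A.card (k + 1) with h | h
      · have : max A.card (k + 1) = k + 1 := by omega
        rw [this]
        exact hzB A.card A rfl hA
      · have : max A.card (k + 1) = max A.card k := by omega
        rw [this]
        exact hz A
  have hLz : Lprod d z ∈ UU d N (k + 1) :=
    list_prod_mem (by
      rintro x hx
      obtain ⟨A, _, rfl⟩ := List.mem_map.mp hx
      exact hfac A)
  have : s = (s * (Lprod d z)⁻¹) * Lprod d z := by group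
  rw [this]
  exact mul_mem hu hLz

theorem UU_chain {k : ℕ} (hk : 1 ≤ k) (hkd : k ≤ d) {s : Finset (Fin d) → G}
    (hs : s ∈ UU d N 1) (hr : ∀ B : Finset (Fin d), B ≠ Finset.univ → s B = 1) :
    s ∈ UU d N k := by
  induction k with
  | zero => omega
  | succ k IH =>
      rcases Nat.eq_zero_or_pos k with rfl | hkpos
      · exact hs
      · exact UU_core d N hkpos (by omega) (IH hkpos (by omega)) hr

theorem top_coord_of_UU {s : Finset (Fin d) → G} (hd : 0 < d)
    (hs : s ∈ UU d N 1) (hr : ∀ B : Finset (Fin d), B ≠ Finset.univ → s B = 1) :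
    s Finset.univ ∈ iterComm N d :=
  UU_coord d N (UU_chain d N (by omega) le_rfl hs hr) Finset.univ

end Core

section GammaSide
variable {G : Type*} [Group G] (d : ℕ) (N : Subgroup G) [hN : N.Normal]
set_option linter.unusedSectionVars false

theorem GammaSub_eq (k : ℕ) :
    GammaSub d N k = ⨆ A : Finset (Fin d), (compFn N k A.card).map (Delta d A) := by
  unfold GammaSub compFn
  exact iSup_congr fun A => (apply_ite (fun H : Subgroup G => H.map (Delta d A)) _ _ _).symm

theorem mem_Gamma_of {k : ℕ} (A : Finset (Fin d)) {x : G} (hx : x ∈ compFn N k A.card) :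
    Delta d A x ∈ GammaSub d N k := by
  rw [GammaSub_eq]
  exact le_iSup (fun A : Finset (Fin d) => (compFn N k A.card).map (Delta d A)) A
    (Subgroup.mem_map_of_mem _ hx)

theorem Gamma_le_normalizer {p q : ℕ} (hq : 1 ≤ q) (hqp : q ≤ p) :
    GammaSub d N q ≤ Subgroup.normalizer (GammaSub d N p) := by
  rw [GammaSub_eq d N q, GammaSub_eq d N p]
  refine iSup_le fun A' => ?_
  rintro _ ⟨y, hy, rfl⟩
  have key : ∀ y' : G, y' ∈ compFn N q A'.card →
      ∀ A : Finset (Fin d), ∀ x ∈ compFn N p A.card,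
      Delta d A' y' * Delta d A x * (Delta d A' y')⁻¹ ∈
        ⨆ A : Finset (Fin d), (compFn N p A.card).map (Delta d A) := by
    intro y' hy' A x hx
    rw [Delta_conj]
    have h1 : ⁅y', x⁆ ∈ compFn N p ((A' ∪ A).card) :=
      comm_compFn_master N hq hqp (Finset.card_le_card Finset.subset_union_right)
        (Finset.card_le_card Finset.subset_union_left)
        ((Finset.card_union_le A' A).trans (by omega))
        (Subgroup.commutator_mem_commutator hy' hx)
    exact mul_mem
      (le_iSup (fun A : Finset (Fin d) => (compFn N p A.card).map (Delta d A)) (A' ∪ A)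
        (Subgroup.mem_map_of_mem _ h1))
      (le_iSup (fun A : Finset (Fin d) => (compFn N p A.card).map (Delta d A)) A
        (Subgroup.mem_map_of_mem _ hx))
  refine mem_normalizer_iSup _ ?_ ?_
  · rintro A _ ⟨x, hx, rfl⟩
    exact key y hy A x hx
  · rintro A _ ⟨x, hx, rfl⟩
    rw [show (Delta d A' y)⁻¹ = Delta d A' y⁻¹ by rw [map_inv],
      show Delta d A' y = (Delta d A' y⁻¹)⁻¹ by rw [map_inv, inv_inv]]
    exact key y⁻¹ (inv_mem hy) A x hx

theorem Gamma_comm_le {k : ℕ} (hk : 1 ≤ k) :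
    ⁅GammaSub d N k, GammaSub d N 1⁆ ≤ GammaSub d N (k + 1) := by
  have h1 := Gamma_le_normalizer d N (q := k) (p := k + 1) hk (by omega)
  have h2 := Gamma_le_normalizer d N (q := 1) (p := k + 1) le_rfl (by omega)
  rw [GammaSub_eq d N k, GammaSub_eq d N 1] at *
  refine commutator_iSup_le _ _ _ h1 h2 ?_
  rintro A A' _ ⟨x, hx, rfl⟩ _ ⟨y, hy, rfl⟩
  rw [Delta_comm]
  have h3 : ⁅x, y⁆ ∈ compFn N (k + 1) ((A ∪ A').card) :=
    comm_compFn_case2 N hk (Finset.card_le_card Finset.subset_union_left)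
      (Finset.card_le_card Finset.subset_union_right)
      (Finset.card_union_le A A')
      (Subgroup.commutator_mem_commutator hx hy)
  exact mem_Gamma_of d N (k := k + 1) (A ∪ A') h3

theorem gammaN_S_le_Gamma : ∀ k : ℕ, gammaN (GammaSub d N 1) k ≤ GammaSub d N (k + 1)
  | 0 => le_rfl
  | k + 1 => by
      show ⁅gammaN (GammaSub d N 1) k, GammaSub d N 1⁆ ≤ GammaSub d N (k + 2)
      calc ⁅gammaN (GammaSub d N 1) k, GammaSub d N 1⁆
          ≤ ⁅GammaSub d N (k + 1), GammaSub d N 1⁆ :=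
            Subgroup.commutator_mono (gammaN_S_le_Gamma k) le_rfl
        _ ≤ GammaSub d N (k + 2) := Gamma_comm_le d N (by omega)

/-- F1 : `Δ_A(γ_{j+1}(N)) ≤ γ_{j+1}(S)` for `|A| = j+1`. -/
theorem delta_gammaN_le_gammaN_S :
    ∀ j : ℕ, ∀ A : Finset (Fin d), A.card = j + 1 → ∀ v ∈ gammaN N j,
      Delta d A v ∈ gammaN (GammaSub d N 1) j := by
  intro j
  induction j with
  | zero =>
      intro A hA v hv
      refine mem_Gamma_of d N A ?_
      rw [hA, compFn_of_ge N (by omega)]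
      exact hv
  | succ j IH =>
      intro A hA v hv
      show Delta d A v ∈ ⁅gammaN (GammaSub d N 1) j, GammaSub d N 1⁆
      rw [show (gammaN N (j + 1) : Subgroup G) = ⁅gammaN N j, N⁆ from rfl,
        Subgroup.commutator_def] at hv
      induction hv using Subgroup.closure_induction with
      | mem x hx =>
          obtain ⟨w, hw, n, hn, rfl⟩ := hx
          have hAne : A.Nonempty := Finset.card_pos.mp (by omega)
          obtain ⟨a, ha⟩ := hAne
          have hcard : (A.erase a).card = j + 1 := by
            rw [Finset.card_erase_of_mem ha, hA]
            omega
          have hunion : A.erase a ∪ {a} = A := by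
            rw [Finset.union_comm, ← Finset.insert_eq, Finset.insert_erase ha]
          have hdelta : Delta d A ⁅w, n⁆ = ⁅Delta d (A.erase a) w, Delta d {a} n⁆ := by
            rw [Delta_comm, hunion]
          rw [hdelta]
          refine Subgroup.commutator_mem_commutator (IH _ hcard w hw) ?_
          refine mem_Gamma_of d N {a} ?_
          rw [Finset.card_singleton, compFn_of_ge N (by omega)]
          exact hn
      | one => rw [map_one]; exact one_mem _
      | mul x y hx hy ihx ihy => rw [map_mul]; exact mul_mem ihx ihy
      | inv x hx ihx => rw [map_inv]; exact inv_mem ihx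

theorem diag_conj_UU {m : ℕ} (g : G) {x : Finset (Fin d) → G} (hx : x ∈ UU d N m) :
    Delta d ∅ g * x * (Delta d ∅ g)⁻¹ ∈ UU d N m := by
  refine Subgroup.iSup_induction _
    (C := fun x => Delta d ∅ g * x * (Delta d ∅ g)⁻¹ ∈ UU d N m) hx ?_ ?_ ?_
  · rintro A _ ⟨y, hy, rfl⟩
    rw [Delta_diag_conj]
    exact mem_UU_of d N A (by
      have : (iterComm N (max A.card m)).Normal := iterComm_normal_s8 N _
      exact this.conj_mem y hy g)
  · simpa using one_mem _
  · intro x y hx hy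
    have : Delta d ∅ g * (x * y) * (Delta d ∅ g)⁻¹ =
        (Delta d ∅ g * x * (Delta d ∅ g)⁻¹) * (Delta d ∅ g * y * (Delta d ∅ g)⁻¹) := by group
    rw [this]
    exact mul_mem hx hy

theorem Gamma_split {s : Finset (Fin d) → G} (hs : s ∈ GammaSub d N (d + 1)) :
    (Delta d ∅ (s ∅))⁻¹ * s ∈ UU d N 1 := by
  let W : Subgroup (Finset (Fin d) → G) := {
    carrier := {s | (Delta d ∅ (s ∅))⁻¹ * s ∈ UU d N 1}
    one_mem' := by
      show (Delta d ∅ ((1 : Finset (Fin d) → G) ∅))⁻¹ * 1 ∈ UU d N 1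
      rw [show (1 : Finset (Fin d) → G) ∅ = 1 from rfl, map_one]
      simpa using one_mem _
    mul_mem' := by
      rintro s t hsW htW
      show (Delta d ∅ ((s * t) ∅))⁻¹ * (s * t) ∈ UU d N 1
      rw [show (s * t) ∅ = s ∅ * t ∅ from rfl, map_mul]
      have key : (Delta d ∅ (s ∅) * Delta d ∅ (t ∅))⁻¹ * (s * t) =
          ((Delta d ∅ (t ∅))⁻¹ * ((Delta d ∅ (s ∅))⁻¹ * s) * ((Delta d ∅ (t ∅))⁻¹)⁻¹) *
          ((Delta d ∅ (t ∅))⁻¹ * t) := by group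
      rw [key]
      refine mul_mem ?_ htW
      rw [show (Delta d ∅ (t ∅))⁻¹ = Delta d ∅ (t ∅)⁻¹ by rw [map_inv]]
      exact diag_conj_UU d N _ hsW
    inv_mem' := by
      rintro s hsW
      show (Delta d ∅ (s⁻¹ ∅))⁻¹ * s⁻¹ ∈ UU d N 1
      rw [show s⁻¹ ∅ = (s ∅)⁻¹ from rfl, map_inv, inv_inv]
      have key : Delta d ∅ (s ∅) * s⁻¹ =
          Delta d ∅ (s ∅) * ((Delta d ∅ (s ∅))⁻¹ * s)⁻¹ * (Delta d ∅ (s ∅))⁻¹ := by group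
      rw [key]
      exact diag_conj_UU d N _ (inv_mem hsW) }
  suffices h : GammaSub d N (d + 1) ≤ W by exact h hs
  rw [GammaSub_eq]
  refine iSup_le fun A => ?_
  rintro _ ⟨x, hx, rfl⟩
  have hcard : A.card < d + 1 := by
    have := Finset.card_le_univ A
    simp only [Finset.card_univ, Fintype.card_fin] at this
    omega
  rw [compFn_of_lt N hcard] at hx
  by_cases hA : A = ∅
  · subst hA
    show (Delta d ∅ (Delta d ∅ x ∅))⁻¹ * Delta d ∅ x ∈ UU d N 1
    rw [show Delta d ∅ x ∅ = x by rw [Delta_apply, if_pos (Finset.empty_subset _)]]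
    simpa using one_mem _
  · show (Delta d ∅ (Delta d A x ∅))⁻¹ * Delta d A x ∈ UU d N 1
    rw [show Delta d A x ∅ = 1 by
        rw [Delta_apply, if_neg (fun h => hA (Finset.subset_empty.mp h))], map_one,
      inv_one, one_mul]
    refine mem_UU_of d N A ?_
    have : max A.card 1 = A.card := by
      have : 1 ≤ A.card := Finset.card_pos.mpr (Finset.nonempty_iff_ne_empty.mpr hA)
      omega
    rw [this]
    exact hx

end GammaSide

/-- **Theorem 2.** Let `G` be perfect, `d ≥ 1`, and `N ⊴ G` with `γ_d(N) > [G, ᵈN]`.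
Then `S = Γ₁(G,N)` is a subdirect subgroup of `G^(𝒫[d]) ≅ G^(2^d)` and
`γ_{d+1}(S) < γ_d(S)`, so `S/γ_{d+1}(S)` is nilpotent of class exactly `d`.
Here `γ_k(S)` is `gammaN S (k-1)`. -/
theorem GammaSub_one_subdirect_and_gamma_lt
    {G : Type*} [Group G] (hperf : ⁅(⊤ : Subgroup G), (⊤ : Subgroup G)⁆ = ⊤)
    {d : ℕ} (hd : 0 < d) (N : Subgroup G) [N.Normal]
    (hN : iterComm N d < gammaN N (d - 1)) :
    (∀ B : Finset (Fin d), Function.Surjective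
      (fun s : ↥(GammaSub d N 1) => (s : Finset (Fin d) → G) B)) ∧
    gammaN (GammaSub d N 1) d < gammaN (GammaSub d N 1) (d - 1) := by
  constructor
  · intro B g
    have hmem : Delta d ∅ g ∈ GammaSub d N 1 := by
      refine mem_Gamma_of d N ∅ ?_
      rw [show (∅ : Finset (Fin d)).card = 0 from rfl, compFn_of_lt N (by omega)]
      exact Subgroup.mem_top g
    refine ⟨⟨Delta d ∅ g, hmem⟩, ?_⟩
    show Delta d ∅ g B = g
    rw [Delta_apply, if_pos (Finset.empty_subset _)]
  · have hd1 : d - 1 + 1 = d := by omega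
    refine lt_of_le_of_ne ?_ ?_
    · have := gammaN_self_succ_le (GammaSub d N 1) (d - 1)
      rwa [hd1] at this
    · intro heq
      obtain ⟨u, huγ, huI⟩ := SetLike.exists_of_lt hN
      have hcardU : (Finset.univ : Finset (Fin d)).card = d - 1 + 1 := by
        rw [Finset.card_univ, Fintype.card_fin]; omega
      have h1 : Delta d Finset.univ u ∈ gammaN (GammaSub d N 1) (d - 1) :=
        delta_gammaN_le_gammaN_S d N (d - 1) Finset.univ hcardU u huγ
      rw [← heq] at h1
      have h2 : Delta d Finset.univ u ∈ GammaSub d N (d + 1) := gammaN_S_le_Gamma d N d h1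
      have hx0 : Delta d Finset.univ u ∅ = 1 := by
        rw [Delta_apply, if_neg]
        intro h
        have : (Finset.univ : Finset (Fin d)) = ∅ := Finset.subset_empty.mp h
        rw [this] at hcardU
        simp at hcardU
      have h3 : Delta d Finset.univ u ∈ UU d N 1 := by
        have := Gamma_split d N h2
        rwa [hx0, map_one, inv_one, one_mul] at this
      have h4 : ∀ B : Finset (Fin d), B ≠ Finset.univ → Delta d Finset.univ u B = 1 := by
        intro B hB
        rw [Delta_apply, if_neg (fun h => hB (Finset.univ_subset_iff.mp h))]
      have h5 := top_coord_of_UU d N hd h3 h4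
      rw [Delta_apply, if_pos (subset_refl _)] at h5
      exact huI h5
end

section
/- Let $\mathbb{F}$ be the field with $4$ elements and let $T$ be the set of $2\times 2$ matrices over $\mathbb{F}$ with trace $0$. Then the $\mathbb{F}$-linear span of the set $U=\{-B+A^{-1}BA \mid B\in T,\ A\in \mathrm{SL}_2(\mathbb{F})\}$ equals $T$ (as an $\mathbb{F}$-submodule of the $2\times 2$ matrices). -/
lemma gen_mem_aux (F : Type*) [Field F] (a b c d : F) (hdet : a * d - b * c = 1)
    (B : Matrix (Fin 2) (Fin 2) F) (hB : B.trace = 0) :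
    -B + !![d, -b; -c, a] * B * !![a, b; c, d] ∈
      {X : Matrix (Fin 2) (Fin 2) F |
        ∃ (B : Matrix (Fin 2) (Fin 2) F) (A : Matrix.SpecialLinearGroup (Fin 2) F),
          B.trace = 0 ∧
          X = -B + (↑(A⁻¹) : Matrix (Fin 2) (Fin 2) F) * B * (↑A : Matrix (Fin 2) (Fin 2) F)} := by
  refine ⟨B, ⟨!![a, b; c, d], by rw [Matrix.det_fin_two_of]; exact hdet⟩, hB, ?_⟩
  show _ = -B + Matrix.adjugate !![a, b; c, d] * B * !![a, b; c, d]
  rw [Matrix.adjugate_fin_two_of]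

/-- **Lemma A.** Over the field `𝔽₄` with 4 elements, the span of
`U = {-B + A⁻¹BA | B ∈ T, A ∈ SL₂(𝔽₄)}` is the submodule `T` of trace-zero
`2 × 2` matrices. -/
theorem span_conj_diff_eq_traceZero
    (F : Type*) [Field F] [Fintype F] (hF : Fintype.card F = 4) :
    Submodule.span F {X : Matrix (Fin 2) (Fin 2) F |
        ∃ (B : Matrix (Fin 2) (Fin 2) F) (A : Matrix.SpecialLinearGroup (Fin 2) F),
          B.trace = 0 ∧
          X = -B + (↑(A⁻¹) : Matrix (Fin 2) (Fin 2) F) * B * (↑A : Matrix (Fin 2) (Fin 2) F)} =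
      LinearMap.ker (Matrix.traceLinearMap (Fin 2) F F) := by
  classical
  have h4 : (4:F) = 0 := by
    have := FiniteField.cast_card_eq_zero F
    rwa [hF] at this
  have h2 : (2:F) = 0 := by
    have h : (2:F) * 2 = 0 := by linear_combination h4
    rcases mul_eq_zero.mp h with h | h <;> exact h
  have hneg : ∀ x : F, -x = x := fun x => by linear_combination -x * h2
  obtain ⟨ω, hω0, hω1⟩ : ∃ ω : F, ω ≠ 0 ∧ ω ≠ 1 := by
    by_contra h
    push_neg at h
    have hsub : (Finset.univ : Finset F) ⊆ ({0, 1} : Finset F) := fun x _ => by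
      rcases eq_or_ne x 0 with h0 | h0
      · simp [h0]
      · simp [h x h0]
    have hle := Finset.card_le_card hsub
    have hc2 : ({0,1} : Finset F).card ≤ 2 := (Finset.card_insert_le _ _).trans (by simp)
    rw [Finset.card_univ, hF] at hle
    omega
  have hc : ω * ω - 1 ≠ 0 := by
    intro h
    apply hω1
    have h' : (ω - 1) * (ω - 1) = 0 := by linear_combination h + (1 - ω) * h2
    exact sub_eq_zero.mp (mul_self_eq_zero.mp h')
  set S : Set (Matrix (Fin 2) (Fin 2) F) :=
    {X : Matrix (Fin 2) (Fin 2) F |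
        ∃ (B : Matrix (Fin 2) (Fin 2) F) (A : Matrix.SpecialLinearGroup (Fin 2) F),
          B.trace = 0 ∧
          X = -B + (↑(A⁻¹) : Matrix (Fin 2) (Fin 2) F) * B * (↑A : Matrix (Fin 2) (Fin 2) F)}
    with hS
  apply le_antisymm
  · rw [Submodule.span_le]
    rintro X ⟨B, A, hB, rfl⟩
    simp only [SetLike.mem_coe, LinearMap.mem_ker, Matrix.traceLinearMap_apply]
    have hAA : (↑A : Matrix (Fin 2) (Fin 2) F) * (↑(A⁻¹) : Matrix (Fin 2) (Fin 2) F) = 1 := by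
      have h := mul_inv_cancel A
      have := congrArg (fun M : Matrix.SpecialLinearGroup (Fin 2) F =>
        (M : Matrix (Fin 2) (Fin 2) F)) h
      simpa only [Matrix.SpecialLinearGroup.coe_mul, Matrix.SpecialLinearGroup.coe_one] using this
    rw [Matrix.trace_add, Matrix.trace_neg, hB, Matrix.trace_mul_cycle, hAA,
      one_mul, hB]
    simp
  · have hdet1 : ω⁻¹ * ω - 0 * 0 = 1 := by simp [inv_mul_cancel₀ hω0]
    have hdet2 : ω * ω⁻¹ - 0 * 0 = 1 := by simp [mul_inv_cancel₀ hω0]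
    have hdet3 : (1:F) * 1 - 1 * 0 = 1 := by ring
    -- m1 = E12
    have hm1 : !![(0:F), 1; 0, 0] ∈ Submodule.span F S := by
      have e1 := gen_mem_aux F ω⁻¹ 0 0 ω hdet1 !![(0:F), 1; 0, 0]
        (by simp [Matrix.trace_fin_two_of])
      have e1' : (-(!![(0:F), 1; 0, 0]) +
          !![ω, -0; -0, ω⁻¹] * !![(0:F), 1; 0, 0] * !![ω⁻¹, 0; 0, ω]) =
          !![0, ω * ω - 1; 0, 0] := by
        ext i j
        fin_cases i <;> fin_cases j <;>
          simp [Matrix.mul_apply, Fin.sum_univ_succ] <;> ring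
      rw [e1'] at e1
      have h := Submodule.smul_mem _ ((ω * ω - 1)⁻¹) (Submodule.subset_span (R := F) e1)
      convert h using 1
      ext i j
      fin_cases i <;> fin_cases j <;>
        simp [Matrix.smul_apply, inv_mul_cancel₀ hc]
    -- m2 = E21
    have hm2 : !![(0:F), 0; 1, 0] ∈ Submodule.span F S := by
      have e2 := gen_mem_aux F ω 0 0 ω⁻¹ hdet2 !![(0:F), 0; 1, 0]
        (by simp [Matrix.trace_fin_two_of])
      have e2' : (-(!![(0:F), 0; 1, 0]) +
          !![ω⁻¹, -0; -0, ω] * !![(0:F), 0; 1, 0] * !![ω, 0; 0, ω⁻¹]) =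
          !![0, 0; ω * ω - 1, 0] := by
        ext i j
        fin_cases i <;> fin_cases j <;>
          simp [Matrix.mul_apply, Fin.sum_univ_succ] <;> ring
      rw [e2'] at e2
      have h := Submodule.smul_mem _ ((ω * ω - 1)⁻¹) (Submodule.subset_span (R := F) e2)
      convert h using 1
      ext i j
      fin_cases i <;> fin_cases j <;>
        simp [Matrix.smul_apply, inv_mul_cancel₀ hc]
    -- m3 = 1
    have hm3 : (1 : Matrix (Fin 2) (Fin 2) F) ∈ Submodule.span F S := by
      have e3 := gen_mem_aux F 1 1 0 1 hdet3 !![(0:F), 0; 1, 0]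
        (by simp [Matrix.trace_fin_two_of])
      have e3' : (-(!![(0:F), 0; 1, 0]) +
          !![1, -1; -0, 1] * !![(0:F), 0; 1, 0] * !![1, 1; 0, 1]) =
          !![1, 1; 0, 1] := by
        ext i j
        fin_cases i <;> fin_cases j <;>
          simp [Matrix.mul_apply, Fin.sum_univ_succ, hneg] <;> linear_combination h2
      rw [e3'] at e3
      have h := Submodule.add_mem _ (Submodule.subset_span (R := F) e3)
        (Submodule.smul_mem _ (-1 : F) hm1)
      convert h using 1
      ext i j
      fin_cases i <;> fin_cases j <;>
        simp [Matrix.smul_apply, Matrix.one_apply, hneg] 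
      · linear_combination -h2
    -- combine
    intro M hM
    simp only [LinearMap.mem_ker, Matrix.traceLinearMap_apply, Matrix.trace_fin_two] at hM
    have h11 : M 1 1 = M 0 0 := by linear_combination hM - M 0 0 * h2
    have hMeq : M = M 0 0 • (1 : Matrix (Fin 2) (Fin 2) F) +
        M 0 1 • !![(0:F), 1; 0, 0] + M 1 0 • !![(0:F), 0; 1, 0] := by
      ext i j
      fin_cases i <;> fin_cases j <;>
        simp [Matrix.smul_apply, Matrix.one_apply, h11]
    rw [hMeq]
    exact Submodule.add_mem _ (Submodule.add_mem _ (Submodule.smul_mem _ _ hm3)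
      (Submodule.smul_mem _ _ hm1)) (Submodule.smul_mem _ _ hm2)
end

section
/- With $\mathbb{F}=\mathbb{F}_4$ and $H$, $M$, $G=HM$ the subgroups of $\mathrm{SL}_6(\mathbb{F})$ defined below, $M$ is a normal subgroup of $G$ (equivalently, every element of $H$ normalizes $M$, so $HM$ is a subgroup of $\mathrm{SL}_6(\mathbb{F})$ containing $M$ as a normal subgroup). -/
/-- The group `SL₆(F)`, with rows and columns indexed by `Fin 3 × Fin 2`, so that
its elements can be viewed as `3 × 3` block matrices with `2 × 2` blocks. -/
abbrev SL6 (F : Type*) [Field F] [Fintype F] : Type _ :=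
  Matrix.SpecialLinearGroup (Fin 3 × Fin 2) F

/-- Assemble a `3 × 3` array of `2 × 2` blocks into a `6 × 6` matrix. -/
def blk3 {F : Type*} [Field F] (f : Fin 3 → Fin 3 → Matrix (Fin 2) (Fin 2) F) :
    Matrix (Fin 3 × Fin 2) (Fin 3 × Fin 2) F :=
  Matrix.of fun p q => f p.1 q.1 p.2 q.2

/-- The subgroup `H` of `SL₆(F)`: block diagonal matrices `diag(A, A, A)` with
`A ∈ SL₂(F)`. -/
def Hset (F : Type*) [Field F] [Fintype F] : Set (SL6 F) :=
  {X | ∃ A : Matrix.SpecialLinearGroup (Fin 2) F,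
    (X : Matrix (Fin 3 × Fin 2) (Fin 3 × Fin 2) F) =
      blk3 ![![(A : Matrix (Fin 2) (Fin 2) F), 0, 0],
              ![0, (A : Matrix (Fin 2) (Fin 2) F), 0],
              ![0, 0, (A : Matrix (Fin 2) (Fin 2) F)]]}

/-- The subgroup `M` of `SL₆(F)`: block upper unitriangular matrices with blocks
`B` (position (1,2)), `C` (position (2,3)) of trace `0` and an arbitrary block `D`
(position (1,3)). -/
def Mset (F : Type*) [Field F] [Fintype F] : Set (SL6 F) :=
  {X | ∃ B C D : Matrix (Fin 2) (Fin 2) F, B.trace = 0 ∧ C.trace = 0 ∧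
    (X : Matrix (Fin 3 × Fin 2) (Fin 3 × Fin 2) F) =
      blk3 ![![1, B, D], ![0, 1, C], ![0, 0, 1]]}

/-- The subgroup `N` of `SL₆(F)`: elements of `M` whose blocks in positions (1,2)
and (2,3) are scalar matrices `b•I` and `c•I`. -/
def Nset (F : Type*) [Field F] [Fintype F] : Set (SL6 F) :=
  {X | ∃ (b c : F) (D : Matrix (Fin 2) (Fin 2) F),
    (X : Matrix (Fin 3 × Fin 2) (Fin 3 × Fin 2) F) =
      blk3 ![![1, b • 1, D], ![0, 1, c • 1], ![0, 0, 1]]}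

/-- The group `G = HM`, i.e. the subgroup of `SL₆(F)` generated by `H ∪ M`. -/
def Gsub (F : Type*) [Field F] [Fintype F] : Subgroup (SL6 F) :=
  Subgroup.closure (Hset F ∪ Mset F)

lemma blk3_mul {F : Type*} [Field F] (f g : Fin 3 → Fin 3 → Matrix (Fin 2) (Fin 2) F) :
    blk3 f * blk3 g = blk3 (fun i k => f i 0 * g 0 k + f i 1 * g 1 k + f i 2 * g 2 k) := by
  ext ⟨i, a⟩ ⟨k, b⟩
  simp [blk3, Matrix.mul_apply, Fintype.sum_prod_type, Fin.sum_univ_three, Fin.sum_univ_two,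
    Matrix.add_apply]

lemma blk3_congr {F : Type*} [Field F] (f g : Fin 3 → Fin 3 → Matrix (Fin 2) (Fin 2) F)
    (h : ∀ i k, f i k = g i k) : blk3 f = blk3 g := by
  ext ⟨i, a⟩ ⟨k, b⟩
  simp only [blk3, Matrix.of_apply]
  rw [h]

lemma blk3_one {F : Type*} [Field F] :
    blk3 (F := F) ![![1, 0, 0], ![0, 1, 0], ![0, 0, 1]] = 1 := by
  ext ⟨i, a⟩ ⟨k, b⟩
  simp only [blk3, Matrix.of_apply, Matrix.one_apply, Prod.mk.injEq]
  fin_cases i <;> fin_cases k <;>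
    simp [Matrix.one_apply, Matrix.vecHead, Matrix.vecTail]

lemma mul_M {F : Type*} [Field F] (B C D B' C' D' : Matrix (Fin 2) (Fin 2) F) :
    blk3 ![![1, B, D], ![0, 1, C], ![0, 0, 1]] * blk3 ![![1, B', D'], ![0, 1, C'], ![0, 0, 1]]
      = blk3 ![![1, B + B', D' + B * C' + D], ![0, 1, C + C'], ![0, 0, 1]] := by
  rw [blk3_mul]
  refine blk3_congr _ _ fun i k => ?_
  fin_cases i <;> fin_cases k <;>
    simp [Matrix.vecHead, Matrix.vecTail] <;> abel

/-- Mset as a subgroup. -/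
def Msub (F : Type*) [Field F] [Fintype F] : Subgroup (SL6 F) where
  carrier := Mset F
  one_mem' := ⟨0, 0, 0, by simp, by simp, by
    rw [Matrix.SpecialLinearGroup.coe_one, ← blk3_one]⟩
  mul_mem' := by
    rintro x y ⟨B, C, D, hB, hC, hx⟩ ⟨B', C', D', hB', hC', hy⟩
    refine ⟨B + B', C + C', D' + B * C' + D, ?_, ?_, ?_⟩
    · simp [Matrix.trace_add, hB, hB']
    · simp [Matrix.trace_add, hC, hC']
    · rw [Matrix.SpecialLinearGroup.coe_mul, hx, hy, mul_M]
  inv_mem' := by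
    rintro x ⟨B, C, D, hB, hC, hx⟩
    refine ⟨-B, -C, B * C - D, by simp [hB], by simp [hC], ?_⟩
    have h1 : (x : Matrix (Fin 3 × Fin 2) (Fin 3 × Fin 2) F) *
        blk3 ![![1, -B, B * C - D], ![0, 1, -C], ![0, 0, 1]] = 1 := by
      rw [hx, mul_M]
      rw [← blk3_one]
      refine blk3_congr _ _ fun i k => ?_
      fin_cases i <;> fin_cases k <;>
        simp [Matrix.vecHead, Matrix.vecTail] <;> abel
    have h2 := mul_eq_one_comm.mp h1
    have h3 : (x : Matrix (Fin 3 × Fin 2) (Fin 3 × Fin 2) F) *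
        ((x⁻¹ : SL6 F) : Matrix (Fin 3 × Fin 2) (Fin 3 × Fin 2) F) = 1 := by
      rw [← Matrix.SpecialLinearGroup.coe_mul, mul_inv_cancel,
        Matrix.SpecialLinearGroup.coe_one]
    calc ((x⁻¹ : SL6 F) : Matrix (Fin 3 × Fin 2) (Fin 3 × Fin 2) F)
        = (blk3 ![![1, -B, B * C - D], ![0, 1, -C], ![0, 0, 1]] * (x : Matrix _ _ F)) *
            ((x⁻¹ : SL6 F) : Matrix _ _ F) := by rw [h2, one_mul]
      _ = blk3 ![![1, -B, B * C - D], ![0, 1, -C], ![0, 0, 1]] := by rw [mul_assoc, h3, mul_one]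

lemma Hset_inv {F : Type*} [Field F] [Fintype F] {g : SL6 F} (hg : g ∈ Hset F) :
    g⁻¹ ∈ Hset F := by
  obtain ⟨A, hA⟩ := hg
  refine ⟨A⁻¹, ?_⟩
  have hAA : (A : Matrix (Fin 2) (Fin 2) F) * ((A⁻¹ : _) : Matrix (Fin 2) (Fin 2) F) = 1 := by
    rw [← Matrix.SpecialLinearGroup.coe_mul, mul_inv_cancel, Matrix.SpecialLinearGroup.coe_one]
  set Ai := ((A⁻¹ : Matrix.SpecialLinearGroup (Fin 2) F) : Matrix (Fin 2) (Fin 2) F)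
  have h1 : (g : Matrix (Fin 3 × Fin 2) (Fin 3 × Fin 2) F) *
      blk3 ![![Ai, 0, 0], ![0, Ai, 0], ![0, 0, Ai]] = 1 := by
    rw [hA, blk3_mul, ← blk3_one]
    refine blk3_congr _ _ fun i k => ?_
    fin_cases i <;> fin_cases k <;>
      simp [Matrix.vecHead, Matrix.vecTail, hAA]
  have h2 := mul_eq_one_comm.mp h1
  have h3 : (g : Matrix (Fin 3 × Fin 2) (Fin 3 × Fin 2) F) *
      ((g⁻¹ : SL6 F) : Matrix (Fin 3 × Fin 2) (Fin 3 × Fin 2) F) = 1 := by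
    rw [← Matrix.SpecialLinearGroup.coe_mul, mul_inv_cancel, Matrix.SpecialLinearGroup.coe_one]
  calc ((g⁻¹ : SL6 F) : Matrix (Fin 3 × Fin 2) (Fin 3 × Fin 2) F)
      = (blk3 ![![Ai, 0, 0], ![0, Ai, 0], ![0, 0, Ai]] * (g : Matrix _ _ F)) *
          ((g⁻¹ : SL6 F) : Matrix _ _ F) := by rw [h2, one_mul]
    _ = blk3 ![![Ai, 0, 0], ![0, Ai, 0], ![0, 0, Ai]] := by rw [mul_assoc, h3, mul_one]

lemma Hset_conj {F : Type*} [Field F] [Fintype F] {g m : SL6 F}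
    (hg : g ∈ Hset F) (hm : m ∈ Mset F) : g * m * g⁻¹ ∈ Mset F := by
  obtain ⟨A, hA⟩ := hg
  obtain ⟨B, C, D, hB, hC, hmv⟩ := hm
  obtain ⟨A', hA'⟩ := Hset_inv ⟨A, hA⟩
  set Am := ((A : Matrix.SpecialLinearGroup (Fin 2) F) : Matrix (Fin 2) (Fin 2) F)
  set Ai := ((A' : Matrix.SpecialLinearGroup (Fin 2) F) : Matrix (Fin 2) (Fin 2) F)
  -- A' is the block of g⁻¹; show Am * Ai = 1 and Ai * Am = 1.
  have hgi : (g : Matrix (Fin 3 × Fin 2) (Fin 3 × Fin 2) F) *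
      ((g⁻¹ : SL6 F) : Matrix (Fin 3 × Fin 2) (Fin 3 × Fin 2) F) = 1 := by
    rw [← Matrix.SpecialLinearGroup.coe_mul, mul_inv_cancel, Matrix.SpecialLinearGroup.coe_one]
  have key : Am * Ai = 1 := by
    have := hgi
    rw [hA, hA', blk3_mul, ← blk3_one] at this
    have h00 := congrFun (congrFun this ((0 : Fin 3), (0 : Fin 2)))
    -- extract (0,0) block entrywise
    ext a b
    have := congrFun (congrFun this (0, a)) (0, b)
    simpa [blk3, Matrix.vecHead, Matrix.vecTail] using this
  have key2 : Ai * Am = 1 := mul_eq_one_comm.mp key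
  refine ⟨Am * B * Ai, Am * C * Ai, Am * D * Ai, ?_, ?_, ?_⟩
  · rw [Matrix.trace_mul_cycle, key2, one_mul, hB]
  · rw [Matrix.trace_mul_cycle, key2, one_mul, hC]
  · rw [Matrix.SpecialLinearGroup.coe_mul, Matrix.SpecialLinearGroup.coe_mul,
      hA, hA', hmv, blk3_mul, blk3_mul]
    refine blk3_congr _ _ fun i k => ?_
    fin_cases i <;> fin_cases k <;>
      simp [Matrix.vecHead, Matrix.vecTail, key, mul_assoc]


/-- **Lemma SL6 (1).** `M` is a normal subgroup of `G`: the set `M` is a subgroup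
(it coincides with the subgroup it generates) and it is normalized by every
element of `G`. -/
theorem Mset_normal_in_Gsub
    (F : Type*) [Field F] [Fintype F] (hF : Fintype.card F = 4) :
    ((Subgroup.closure (Mset F) : Set (SL6 F)) = Mset F) ∧
    ∀ g ∈ Gsub F, ∀ m ∈ Mset F, g * m * g⁻¹ ∈ Mset F := by
  constructor
  · rw [show Mset F = ↑(Msub F) from rfl, Subgroup.closure_eq]
  · have hle : Gsub F ≤ Subgroup.normalizer (Msub F : Set (SL6 F)) := by
      rw [Gsub, Subgroup.closure_le]
      rintro g (hg | hg)
      · rw [SetLike.mem_coe, Subgroup.mem_normalizer_iff]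
        intro n
        constructor
        · intro hn
          exact Hset_conj hg hn
        · intro hn
          have := Hset_conj (Hset_inv hg) hn
          exact (by simpa [mul_assoc] using this : n ∈ Mset F)
      · exact Subgroup.le_normalizer (show g ∈ Msub F from hg)
    intro g hg m hm
    exact (hle hg m).mp hm
end

section
/- With $\mathbb{F}=\mathbb{F}_4$ and $H$, $M$ the subgroups of $\mathrm{SL}_6(\mathbb{F})$ defined below, the commutator subgroup $[H,M]$ equals $M$. -/
open Matrix
open scoped commutatorElement

namespace ClaimAux

variable {F : Type*} [Field F]

theorem blk3_mul (f g : Fin 3 → Fin 3 → Matrix (Fin 2) (Fin 2) F) :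
    blk3 f * blk3 g = blk3 (fun i j => ∑ k, f i k * g k j) := by
  ext ⟨i,a⟩ ⟨j,b⟩
  simp [blk3, Matrix.mul_apply, Fintype.sum_prod_type, Finset.sum_apply,
    Fin.sum_univ_two, Fin.sum_univ_three]

theorem blk3_one :
    (blk3 ![![1,0,0],![0,1,0],![0,0,1]] : Matrix (Fin 3 × Fin 2) (Fin 3 × Fin 2) F) = 1 := by
  ext ⟨i,a⟩ ⟨j,b⟩
  fin_cases i <;> fin_cases j <;>
    simp [blk3, Matrix.one_apply, Prod.ext_iff, Matrix.vecHead, Matrix.vecTail]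

theorem blk3_blockTriangular (f : Fin 3 → Fin 3 → Matrix (Fin 2) (Fin 2) F)
    (h : ∀ i j : Fin 3, j < i → f i j = 0) :
    (blk3 f).BlockTriangular Prod.fst := by
  rintro ⟨i,a⟩ ⟨j,b⟩ hij
  simp only [blk3, Matrix.of_apply]
  rw [h i j hij]
  rfl

theorem det_blk3 (f : Fin 3 → Fin 3 → Matrix (Fin 2) (Fin 2) F)
    (h : ∀ i j : Fin 3, j < i → f i j = 0) :
    (blk3 f).det = (f 0 0).det * ((f 1 1).det * (f 2 2).det) := by
  rw [Matrix.BlockTriangular.det (blk3_blockTriangular f h)]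
  have himg : (Finset.univ : Finset (Fin 3 × Fin 2)).image Prod.fst = Finset.univ := by decide
  rw [himg, Fin.prod_univ_three]
  have key : ∀ i : Fin 3, ((blk3 f).toSquareBlock Prod.fst i).det = (f i i).det := by
    intro i
    let e : Fin 2 ≃ {p : Fin 3 × Fin 2 // p.1 = i} :=
      ⟨fun a => ⟨(i, a), rfl⟩, fun p => p.1.2, fun a => rfl, fun p => by
        rcases p with ⟨⟨j,a⟩,hp⟩; subst hp; rfl⟩
    have hre : Matrix.reindex e.symm e.symm ((blk3 f).toSquareBlock Prod.fst i) = f i i := by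
      ext a b
      simp [Matrix.toSquareBlock, Matrix.toSquareBlockProp, blk3, e]
    rw [← Matrix.det_reindex_self e.symm ((blk3 f).toSquareBlock Prod.fst i), hre]
  rw [key 0, key 1, key 2, mul_assoc]

theorem blk3_congr {f g : Fin 3 → Fin 3 → Matrix (Fin 2) (Fin 2) F}
    (h : ∀ i j, f i j = g i j) : blk3 f = blk3 g :=
  congrArg _ (funext fun i => funext (h i))

variable [Fintype F]

def Mel (B C D : Matrix (Fin 2) (Fin 2) F) : SL6 F :=
  ⟨blk3 ![![1,B,D],![0,1,C],![0,0,1]], by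
    rw [det_blk3]
    · simp
    · intro i j hij
      fin_cases i <;> fin_cases j <;> first | rfl | exact absurd hij (by decide)⟩

def Hel (A : Matrix (Fin 2) (Fin 2) F) (hA : A.det = 1) : SL6 F :=
  ⟨blk3 ![![A,0,0],![0,A,0],![0,0,A]], by
    rw [det_blk3]
    · simp [hA]
    · intro i j hij
      fin_cases i <;> fin_cases j <;> first | rfl | exact absurd hij (by decide)⟩

theorem Mel_mul (B C D B' C' D' : Matrix (Fin 2) (Fin 2) F) :
    Mel B C D * Mel B' C' D' = Mel (B+B') (C+C') (D + B*C' + D') := by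
  apply Subtype.ext
  rw [Matrix.SpecialLinearGroup.coe_mul]
  show blk3 _ * blk3 _ = blk3 _
  rw [blk3_mul]
  apply blk3_congr
  intro i j
  fin_cases i <;> fin_cases j <;>
    simp [Fin.sum_univ_three, Matrix.vecHead, Matrix.vecTail] <;> abel

theorem Mel_zero : (Mel 0 0 0 : SL6 F) = 1 := by
  apply Subtype.ext
  rw [Matrix.SpecialLinearGroup.coe_one]
  exact blk3_one

theorem Hel_mul_Mel_mul_Hel (A A' : Matrix (Fin 2) (Fin 2) F) (hA : A.det = 1) (hA' : A'.det = 1)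
    (hAA' : A * A' = 1) (B C D : Matrix (Fin 2) (Fin 2) F) :
    Hel A hA * Mel B C D * Hel A' hA' = Mel (A*B*A') (A*C*A') (A*D*A') := by
  apply Subtype.ext
  rw [Matrix.SpecialLinearGroup.coe_mul, Matrix.SpecialLinearGroup.coe_mul]
  show (blk3 _ * blk3 _) * blk3 _ = blk3 _
  rw [blk3_mul, blk3_mul]
  apply blk3_congr
  intro i j
  fin_cases i <;> fin_cases j <;>
    simp [Fin.sum_univ_three, Matrix.vecHead, Matrix.vecTail, hAA', Matrix.mul_assoc]

theorem Mel_inv (B C D : Matrix (Fin 2) (Fin 2) F) :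
    (Mel B C D)⁻¹ = Mel (-B) (-C) (B*C - D) := by
  apply inv_eq_of_mul_eq_one_right
  rw [Mel_mul]
  rw [show B + -B = 0 by abel, show C + -C = 0 by abel,
      show D + B * -C + (B*C - D) = 0 by rw [Matrix.mul_neg]; abel]
  exact Mel_zero

theorem Mel_mem (B C D : Matrix (Fin 2) (Fin 2) F) (hB : B.trace = 0) (hC : C.trace = 0) :
    Mel B C D ∈ Mset F :=
  ⟨B, C, D, hB, hC, rfl⟩

theorem Hel_mem (A : Matrix (Fin 2) (Fin 2) F) (hA : A.det = 1) :
    Hel A hA ∈ Hset F :=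
  ⟨⟨A, hA⟩, rfl⟩

theorem Hel_inv (A A' : Matrix (Fin 2) (Fin 2) F) (hA : A.det = 1) (hA' : A'.det = 1)
    (hAA' : A * A' = 1) : (Hel A hA)⁻¹ = Hel A' hA' := by
  apply inv_eq_of_mul_eq_one_right
  have := Hel_mul_Mel_mul_Hel A A' hA hA' hAA' 0 0 0
  rw [Mel_zero, mul_one] at this
  rw [this]
  simp [Mel_zero]

theorem commHM (A A' : Matrix (Fin 2) (Fin 2) F) (hA : A.det = 1) (hA' : A'.det = 1)
    (hAA' : A * A' = 1) (B C D : Matrix (Fin 2) (Fin 2) F) :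
    ⁅Hel A hA, Mel B C D⁆ =
      Mel (A*B*A' + -B) (A*C*A' + -C) (A*D*A' + (A*B*A') * -C + (B*C - D)) := by
  rw [commutatorElement_def, Hel_inv A A' hA hA' hAA', Mel_inv, mul_assoc (Hel A hA),
    ← mul_assoc (Hel A hA), Hel_mul_Mel_mul_Hel A A' hA hA' hAA', Mel_mul]

theorem mem_Mset_iff_Mel {X : SL6 F} :
    X ∈ Mset F ↔ ∃ B C D : Matrix (Fin 2) (Fin 2) F,
      B.trace = 0 ∧ C.trace = 0 ∧ X = Mel B C D := by
  constructor
  · rintro ⟨B,C,D,hB,hC,h⟩; exact ⟨B,C,D,hB,hC,Subtype.ext h⟩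
  · rintro ⟨B,C,D,hB,hC,rfl⟩; exact Mel_mem B C D hB hC

theorem trace_conj {A A' X : Matrix (Fin 2) (Fin 2) F} (hAA' : A * A' = 1) :
    (A*X*A').trace = X.trace := by
  rw [Matrix.trace_mul_comm, ← Matrix.mul_assoc, mul_eq_one_comm.mp hAA', Matrix.one_mul]

theorem Hset_conj : ∀ g ∈ Hset F, ∀ m ∈ Mset F, g * m * g⁻¹ ∈ Mset F := by
  rintro g ⟨A, hg⟩ m hm
  obtain ⟨B,C,D,hB,hC,rfl⟩ := mem_Mset_iff_Mel.mp hm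
  have hAA' : (A : Matrix (Fin 2) (Fin 2) F) * ((A⁻¹ : Matrix.SpecialLinearGroup (Fin 2) F) :
      Matrix (Fin 2) (Fin 2) F) = 1 := by
    rw [← Matrix.SpecialLinearGroup.coe_mul, mul_inv_cancel, Matrix.SpecialLinearGroup.coe_one]
  have hgel : g = Hel (A : Matrix (Fin 2) (Fin 2) F) A.2 := Subtype.ext hg
  rw [hgel, Hel_inv _ ((A⁻¹ : Matrix.SpecialLinearGroup (Fin 2) F) : Matrix (Fin 2) (Fin 2) F)
    A.2 (A⁻¹).2 hAA', Hel_mul_Mel_mul_Hel _ _ _ _ hAA']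
  exact Mel_mem _ _ _ (by rw [trace_conj hAA', hB]) (by rw [trace_conj hAA', hC])

theorem Hset_inv : ∀ g ∈ Hset F, g⁻¹ ∈ Hset F := by
  rintro g ⟨A, hg⟩
  have hAA' : (A : Matrix (Fin 2) (Fin 2) F) * ((A⁻¹ : Matrix.SpecialLinearGroup (Fin 2) F) :
      Matrix (Fin 2) (Fin 2) F) = 1 := by
    rw [← Matrix.SpecialLinearGroup.coe_mul, mul_inv_cancel, Matrix.SpecialLinearGroup.coe_one]
  have hgel : g = Hel (A : Matrix (Fin 2) (Fin 2) F) A.2 := Subtype.ext hg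
  rw [hgel, Hel_inv _ ((A⁻¹ : Matrix.SpecialLinearGroup (Fin 2) F) : Matrix (Fin 2) (Fin 2) F)
    A.2 (A⁻¹).2 hAA']
  exact Hel_mem _ _

theorem conj_mem_closureM {g : SL6 F} (hg : ∀ m ∈ Mset F, g * m * g⁻¹ ∈ Mset F) {x : SL6 F}
    (hx : x ∈ Subgroup.closure (Mset F)) : g * x * g⁻¹ ∈ Subgroup.closure (Mset F) := by
  induction hx using Subgroup.closure_induction with
  | mem y hy => exact Subgroup.subset_closure (hg y hy)
  | one => simpa using one_mem _
  | mul y z hy hz ihy ihz =>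
      have := mul_mem ihy ihz
      have heq : (g * y * g⁻¹) * (g * z * g⁻¹) = g * (y * z) * g⁻¹ := by group
      rwa [heq] at this
  | inv y hy ih =>
      have := inv_mem ih
      have heq : (g * y * g⁻¹)⁻¹ = g * y⁻¹ * g⁻¹ := by group
      rwa [heq] at this

theorem clH_le_normalizer :
    Subgroup.closure (Hset F) ≤ Subgroup.normalizer (Subgroup.closure (Mset F) : Set (SL6 F)) := by
  rw [Subgroup.closure_le]
  intro g hg
  rw [SetLike.mem_coe, Subgroup.mem_normalizer_iff]
  intro x
  constructor
  · exact fun hx => conj_mem_closureM (Hset_conj g hg) hx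
  · intro hx
    have := conj_mem_closureM (Hset_conj g⁻¹ (Hset_inv g hg)) hx
    have heq : g⁻¹ * (g * x * g⁻¹) * g⁻¹⁻¹ = x := by group
    rwa [heq] at this

theorem forward :
    ⁅Subgroup.closure (Hset F), Subgroup.closure (Mset F)⁆ ≤ Subgroup.closure (Mset F) := by
  rw [Subgroup.commutator_le]
  intro g1 hg1 g2 hg2
  have h1 : g1 * g2 * g1⁻¹ ∈ Subgroup.closure (Mset F) :=
    (Subgroup.mem_normalizer_iff.mp (clH_le_normalizer hg1) g2).mp hg2
  have heq : ⁅g1, g2⁆ = (g1 * g2 * g1⁻¹) * g2⁻¹ := by group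
  rw [heq]
  exact mul_mem h1 (inv_mem hg2)

theorem two_eq_zero (hF : Fintype.card F = 4) : (2 : F) = 0 := by
  obtain ⟨n, hp, hcard⟩ := FiniteField.card F (ringChar F)
  have h4 : ringChar F ^ (n : ℕ) = 4 := by rw [← hcard, hF]
  have hd : ringChar F ∣ 4 := h4 ▸ dvd_pow_self _ n.2.ne'
  have hle : ringChar F ≤ 4 := Nat.le_of_dvd (by norm_num) hd
  interval_cases h : ringChar F <;> first
    | (exfalso; revert hd hp; decide)
    | (haveI : CharP F 2 := h ▸ ringChar.charP F; exact CharP.cast_eq_zero F 2)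

theorem exists_omega (hF : Fintype.card F = 4) :
    ∃ ω : F, ω^2 + ω + 1 = 0 ∧ ω * ω^2 = 1 := by
  have hcu : Nat.card Fˣ = 3 := by
    rw [Nat.card_units, Nat.card_eq_fintype_card, hF]
  have : Nontrivial Fˣ := by
    rw [← Finite.one_lt_card_iff_nontrivial, hcu]; norm_num
  obtain ⟨x, hx⟩ := exists_ne (1 : Fˣ)
  have h3 : (x : F) ^ 3 = 1 := by
    have := pow_card_eq_one' (x := x)
    rw [hcu] at this
    calc (x:F)^3 = ((x^3 : Fˣ) : F) := by push_cast; ring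
    _ = 1 := by rw [this]; rfl
  refine ⟨x, ?_, by linear_combination h3⟩
  have hne : (x : F) - 1 ≠ 0 := by
    intro h
    exact hx (Units.ext (by rw [sub_eq_zero] at h; simpa using h))
  have : ((x:F) - 1) * ((x:F)^2 + x + 1) = 0 := by linear_combination h3
  rcases mul_eq_zero.mp this with h | h
  · exact absurd h hne
  · exact h

theorem pow4 (hF : Fintype.card F = 4) (t : F) : t ^ 4 = t := by
  have := FiniteField.pow_card t
  rwa [hF] at this

theorem reverse (hF : Fintype.card F = 4) :
    Subgroup.closure (Mset F) ≤ ⁅Subgroup.closure (Hset F), Subgroup.closure (Mset F)⁆ := by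
  set K := ⁅Subgroup.closure (Hset F), Subgroup.closure (Mset F)⁆ with hK
  have h2 : (2 : F) = 0 := two_eq_zero hF
  obtain ⟨w, hw, hw3⟩ := exists_omega hF
  have addself : ∀ X : Matrix (Fin 2) (Fin 2) F, X + X = 0 := by
    intro X; ext i j
    simp only [Matrix.add_apply, Matrix.zero_apply]
    linear_combination (X i j) * h2
  -- elementary matrices
  have detA1 : (!![1,1;0,1] : Matrix (Fin 2) (Fin 2) F).det = 1 := by
    simp [Matrix.det_fin_two_of]
  have hA1 : (!![1,1;0,1] : Matrix (Fin 2) (Fin 2) F) * !![1,1;0,1] = 1 := by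
    ext i j; fin_cases i <;> fin_cases j <;>
      simp [Matrix.mul_apply, Fin.sum_univ_two, Matrix.one_apply] <;>
      linear_combination h2
  have detA3 : (!![0,1;1,0] : Matrix (Fin 2) (Fin 2) F).det = 1 := by
    rw [Matrix.det_fin_two_of]; linear_combination -h2
  have hA3 : (!![0,1;1,0] : Matrix (Fin 2) (Fin 2) F) * !![0,1;1,0] = 1 := by
    ext i j; fin_cases i <;> fin_cases j <;>
      simp [Matrix.mul_apply, Fin.sum_univ_two, Matrix.one_apply]
  have detAw : (!![w,0;0,w^2] : Matrix (Fin 2) (Fin 2) F).det = 1 := by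
    rw [Matrix.det_fin_two_of]; linear_combination hw3
  have detAw' : (!![w^2,0;0,w] : Matrix (Fin 2) (Fin 2) F).det = 1 := by
    rw [Matrix.det_fin_two_of]; linear_combination hw3
  have hAw : (!![w,0;0,w^2] : Matrix (Fin 2) (Fin 2) F) * !![w^2,0;0,w] = 1 := by
    ext i j; fin_cases i <;> fin_cases j <;>
      simp [Matrix.mul_apply, Fin.sum_univ_two, Matrix.one_apply] <;>
      linear_combination hw3
  -- generic commutator producers
  have genB : ∀ (A A' : Matrix (Fin 2) (Fin 2) F) (hA : A.det = 1) (hA' : A'.det = 1)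
      (hAA' : A * A' = 1) (B : Matrix (Fin 2) (Fin 2) F), B.trace = 0 →
      Mel (A*B*A' + -B) 0 0 ∈ K := by
    intro A A' hA hA' hAA' B hB
    have hmem : ⁅Hel A hA, Mel B 0 0⁆ ∈ K :=
      Subgroup.commutator_mem_commutator (Subgroup.subset_closure (Hel_mem A hA))
        (Subgroup.subset_closure (Mel_mem B 0 0 hB (Matrix.trace_zero _ _)))
    rw [commHM A A' hA hA' hAA'] at hmem
    simpa using hmem
  have genC : ∀ (A A' : Matrix (Fin 2) (Fin 2) F) (hA : A.det = 1) (hA' : A'.det = 1)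
      (hAA' : A * A' = 1) (C : Matrix (Fin 2) (Fin 2) F), C.trace = 0 →
      Mel 0 (A*C*A' + -C) 0 ∈ K := by
    intro A A' hA hA' hAA' C hC
    have hmem : ⁅Hel A hA, Mel 0 C 0⁆ ∈ K :=
      Subgroup.commutator_mem_commutator (Subgroup.subset_closure (Hel_mem A hA))
        (Subgroup.subset_closure (Mel_mem 0 C 0 (Matrix.trace_zero _ _) hC))
    rw [commHM A A' hA hA' hAA'] at hmem
    simpa using hmem
  have genD : ∀ (A A' : Matrix (Fin 2) (Fin 2) F) (hA : A.det = 1) (hA' : A'.det = 1)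
      (hAA' : A * A' = 1) (D : Matrix (Fin 2) (Fin 2) F),
      Mel 0 0 (A*D*A' + -D) ∈ K := by
    intro A A' hA hA' hAA' D
    have hmem : ⁅Hel A hA, Mel 0 0 D⁆ ∈ K :=
      Subgroup.commutator_mem_commutator (Subgroup.subset_closure (Hel_mem A hA))
        (Subgroup.subset_closure (Mel_mem 0 0 D (Matrix.trace_zero _ _) (Matrix.trace_zero _ _)))
    rw [commHM A A' hA hA' hAA'] at hmem
    simpa [sub_eq_add_neg] using hmem
  -- the span computation
  have span : ∀ X : Matrix (Fin 2) (Fin 2) F, X.trace = 0 →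
      ∃ Y Z : Matrix (Fin 2) (Fin 2) F, Y.trace = 0 ∧ Z.trace = 0 ∧
      X = (!![1,1;0,1] * Y * !![1,1;0,1] + -Y) + (!![w,0;0,w^2] * Z * !![w^2,0;0,w] + -Z) := by
    intro X hX
    have hX' : X 0 0 + X 1 1 = 0 := by
      rw [← Matrix.trace_fin_two, hX]
    refine ⟨!![0,0; X 0 0, 0], !![0, w^2*(X 0 1 - X 0 0); w * (X 1 0), 0], by
      simp [Matrix.trace_fin_two_of], by simp [Matrix.trace_fin_two_of], ?_⟩
    ext i j
    fin_cases i <;> fin_cases j <;>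
      simp [Matrix.mul_apply, Fin.sum_univ_two] <;>
      first
        | linear_combination (X 0 1 - X 0 0) * ((1 + w - w^2) * hw - w * h2)
        | linear_combination (X 1 0) * ((w^2 - w^3 - 1) * hw + (w + 1) * h2)
        | linear_combination X 1 1 * h2 - hX'
  -- L1, L2, L3
  have L1 : ∀ B : Matrix (Fin 2) (Fin 2) F, B.trace = 0 → Mel B 0 0 ∈ K := by
    intro B hB
    obtain ⟨Y, Z, hYt, hZt, hsum⟩ := span B hB
    have hm := mul_mem (genB _ _ detA1 detA1 hA1 Y hYt) (genB _ _ detAw detAw' hAw Z hZt)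
    rw [Mel_mul] at hm
    simpa only [Matrix.mul_zero, add_zero, zero_add, ← hsum] using hm
  have L2 : ∀ C : Matrix (Fin 2) (Fin 2) F, C.trace = 0 → Mel 0 C 0 ∈ K := by
    intro C hC
    obtain ⟨Y, Z, hYt, hZt, hsum⟩ := span C hC
    have hm := mul_mem (genC _ _ detA1 detA1 hA1 Y hYt) (genC _ _ detAw detAw' hAw Z hZt)
    rw [Mel_mul] at hm
    simpa only [Matrix.mul_zero, Matrix.zero_mul, add_zero, zero_add, ← hsum] using hm
  have L3 : ∀ D : Matrix (Fin 2) (Fin 2) F, D.trace = 0 → Mel 0 0 D ∈ K := by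
    intro D hD
    obtain ⟨Y, Z, hYt, hZt, hsum⟩ := span D hD
    have hm := mul_mem (genD _ _ detA1 detA1 hA1 Y) (genD _ _ detAw detAw' hAw Z)
    rw [Mel_mul] at hm
    simpa only [Matrix.mul_zero, Matrix.zero_mul, add_zero, zero_add, ← hsum] using hm
  -- L4 : realizing any trace
  have L4 : ∀ t : F, ∃ E : Matrix (Fin 2) (Fin 2) F, E.trace = t ∧ Mel 0 0 E ∈ K := by
    intro t
    set s := t^2 with hs
    set Bt : Matrix (Fin 2) (Fin 2) F := !![0,s;0,0] with hBt
    have hBtt : Bt.trace = 0 := by simp [hBt, Matrix.trace_fin_two_of]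
    have c1 : ⁅Hel !![0,1;1,0] detA3, Mel Bt Bt 0⁆ ∈ K :=
      Subgroup.commutator_mem_commutator (Subgroup.subset_closure (Hel_mem _ detA3))
        (Subgroup.subset_closure (Mel_mem Bt Bt 0 hBtt hBtt))
    rw [commHM _ _ detA3 detA3 hA3] at c1
    set Xb := !![0,1;1,0] * Bt * !![0,1;1,0] + -Bt with hXb
    set Xd := !![0,1;1,0] * (0 : Matrix (Fin 2) (Fin 2) F) * !![0,1;1,0] +
      (!![0,1;1,0] * Bt * !![0,1;1,0]) * -Bt + (Bt*Bt - 0) with hXd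
    have hXbt : Xb.trace = 0 := by
      simp [hXb, hBt, Matrix.trace_fin_two_of, Matrix.mul_apply, Fin.sum_univ_two,
        Matrix.trace_fin_two]
    have hP : Mel Xb 0 0 * (Mel Xb Xb Xd * Mel 0 Xb 0) = Mel 0 0 (Xd + Xb*Xb) := by
      rw [Mel_mul, Mel_mul]
      simp only [addself, Matrix.mul_zero, Matrix.zero_mul, add_zero, zero_add]
    have hE : Mel 0 0 (Xd + Xb*Xb) ∈ K := by
      rw [← hP]
      exact mul_mem (L1 Xb hXbt) (mul_mem c1 (L2 Xb hXbt))
    refine ⟨Xd + Xb*Xb, ?_, hE⟩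
    have h4 : t^4 = t := pow4 hF t
    simp [hXd, hXb, hBt, Matrix.trace_fin_two, Matrix.mul_apply, Fin.sum_univ_two, hs]
    linear_combination h4 - (2*t^4) * h2
  -- final assembly
  rw [Subgroup.closure_le]
  intro x hx
  obtain ⟨B, C, D, hB, hC, rfl⟩ := mem_Mset_iff_Mel.mp hx
  obtain ⟨E, hEt, hEK⟩ := L4 ((D + B*C).trace)
  have htr0 : (E + (D + B*C)).trace = 0 := by
    rw [Matrix.trace_add, hEt]
    linear_combination ((D + B*C).trace) * h2
  have key : Mel B 0 0 * Mel 0 C 0 * Mel 0 0 E * Mel 0 0 (E + (D + B*C)) = Mel B C D := by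
    rw [Mel_mul, Mel_mul, Mel_mul]
    simp only [Matrix.mul_zero, Matrix.zero_mul, add_zero, zero_add]
    congr 1
    rw [show B*C + E + (E + (D + B*C)) = (B*C + B*C) + ((E + E) + D) from by abel,
      addself, addself, zero_add, zero_add]
  rw [← key]
  exact mul_mem (mul_mem (mul_mem (L1 B hB) (L2 C hC)) hEK) (L3 _ htr0)

end ClaimAux

/-- **Claim (15a).** The commutator subgroup `[H, M]` equals `M` (as subgroups of
`SL₆(𝔽₄)`, i.e. as subgroups generated by the corresponding sets). -/
theorem commutator_Hset_Mset_eq_Mset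
    (F : Type*) [Field F] [Fintype F] (hF : Fintype.card F = 4) :
    ⁅Subgroup.closure (Hset F), Subgroup.closure (Mset F)⁆ =
      Subgroup.closure (Mset F) := by
  exact le_antisymm ClaimAux.forward (ClaimAux.reverse hF)
end

section
/- With $\mathbb{F}=\mathbb{F}_4$ and $H$, $M$, $N$, $G=HM$ the subgroups of $\mathrm{SL}_6(\mathbb{F})$ defined below, $N$ is a normal subgroup of $G$. -/
namespace SL6Aux

variable {F : Type*} [Field F]

theorem blk3_congr {f g : Fin 3 → Fin 3 → Matrix (Fin 2) (Fin 2) F}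
    (h : ∀ i j, f i j = g i j) : blk3 f = blk3 g := by
  ext ⟨i, a⟩ ⟨j, b⟩; simp [blk3, h i j]

theorem blk3_mul (f g : Fin 3 → Fin 3 → Matrix (Fin 2) (Fin 2) F) :
    blk3 f * blk3 g = blk3 (fun i j => ∑ k, f i k * g k j) := by
  ext ⟨i, a⟩ ⟨j, b⟩
  simp [blk3, Matrix.mul_apply, Fintype.sum_prod_type, Matrix.sum_apply]

/-- Upper unitriangular block matrix. -/
abbrev Tm (B C D : Matrix (Fin 2) (Fin 2) F) : Matrix (Fin 3 × Fin 2) (Fin 3 × Fin 2) F :=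
  blk3 ![![1, B, D], ![0, 1, C], ![0, 0, 1]]

/-- Block diagonal matrix `diag(A,A,A)`. -/
abbrev Dm (A : Matrix (Fin 2) (Fin 2) F) : Matrix (Fin 3 × Fin 2) (Fin 3 × Fin 2) F :=
  blk3 ![![A, 0, 0], ![0, A, 0], ![0, 0, A]]

theorem blk3_one : (Tm 0 0 0 : Matrix _ _ F) = 1 := by
  ext ⟨i, a⟩ ⟨j, b⟩
  fin_cases i <;> fin_cases j <;>
    simp [blk3, Matrix.one_apply, Prod.ext_iff] <;> aesop

theorem Tm_mul (B C D B' C' D' : Matrix (Fin 2) (Fin 2) F) :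
    Tm B C D * Tm B' C' D' = Tm (B + B') (C + C') (D + D' + B * C') := by
  rw [blk3_mul]; apply blk3_congr; intro i j
  fin_cases i <;> fin_cases j <;>
    simp [Fin.sum_univ_three, Matrix.vecHead, Matrix.vecTail] <;> try abel

theorem Dm_mul_Tm (A B C D : Matrix (Fin 2) (Fin 2) F) :
    Dm A * Tm B C D = blk3 ![![A, A*B, A*D], ![0, A, A*C], ![0, 0, A]] := by
  rw [blk3_mul]; apply blk3_congr; intro i j
  fin_cases i <;> fin_cases j <;>
    simp [Fin.sum_univ_three, Matrix.vecHead, Matrix.vecTail]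

theorem Dm_mul_Dm (A A' : Matrix (Fin 2) (Fin 2) F) :
    Dm A * Dm A' = Dm (A * A') := by
  rw [blk3_mul]; apply blk3_congr; intro i j
  fin_cases i <;> fin_cases j <;>
    simp [Fin.sum_univ_three, Matrix.vecHead, Matrix.vecTail]

theorem Dm_conj (A A' B C D : Matrix (Fin 2) (Fin 2) F) (h : A * A' = 1) :
    Dm A * Tm B C D * Dm A' = Tm (A*B*A') (A*C*A') (A*D*A') := by
  rw [Dm_mul_Tm, blk3_mul]; apply blk3_congr; intro i j
  fin_cases i <;> fin_cases j <;>
    simp [Fin.sum_univ_three, Matrix.vecHead, Matrix.vecTail, h]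

variable [Fintype F]

theorem coe_inv_eq (x : SL6 F) (M' : Matrix (Fin 3 × Fin 2) (Fin 3 × Fin 2) F)
    (h : (x : Matrix (Fin 3 × Fin 2) (Fin 3 × Fin 2) F) * M' = 1) :
    ((x⁻¹ : SL6 F) : Matrix (Fin 3 × Fin 2) (Fin 3 × Fin 2) F) = M' := by
  calc ((x⁻¹ : SL6 F) : Matrix (Fin 3 × Fin 2) (Fin 3 × Fin 2) F)
      = ↑(x⁻¹) * ((x : Matrix (Fin 3 × Fin 2) (Fin 3 × Fin 2) F) * M') := by rw [h, mul_one]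
    _ = (((x⁻¹ * x : SL6 F)) : Matrix (Fin 3 × Fin 2) (Fin 3 × Fin 2) F) * M' := by
        rw [Matrix.SpecialLinearGroup.coe_mul, mul_assoc]
    _ = M' := by rw [inv_mul_cancel, Matrix.SpecialLinearGroup.coe_one, one_mul]

theorem one_mem_N : (1 : SL6 F) ∈ Nset F := by
  refine ⟨0, 0, 0, ?_⟩
  simp only [zero_smul]
  rw [Matrix.SpecialLinearGroup.coe_one, ← blk3_one]

theorem mul_mem_N : ∀ x ∈ Nset F, ∀ y ∈ Nset F, x * y ∈ Nset F := by
  rintro x ⟨b, c, D, hx⟩ y ⟨b', c', D', hy⟩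
  refine ⟨b + b', c + c', D + D' + (b • 1) * (c' • 1), ?_⟩
  rw [Matrix.SpecialLinearGroup.coe_mul, hx, hy, Tm_mul, add_smul, add_smul]

theorem inv_coe_N {x : SL6 F} {b c : F} {D : Matrix (Fin 2) (Fin 2) F}
    (hx : (x : Matrix (Fin 3 × Fin 2) (Fin 3 × Fin 2) F) =
      blk3 ![![1, b • 1, D], ![0, 1, c • 1], ![0, 0, 1]]) :
    ((x⁻¹ : SL6 F) : Matrix (Fin 3 × Fin 2) (Fin 3 × Fin 2) F) =
      Tm (-(b • 1)) (-(c • 1)) ((b • 1) * (c • 1) - D) := by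
  apply coe_inv_eq
  rw [hx, Tm_mul]
  have h1 : b • (1 : Matrix (Fin 2) (Fin 2) F) + -(b • 1) = 0 := by abel
  have h2 : c • (1 : Matrix (Fin 2) (Fin 2) F) + -(c • 1) = 0 := by abel
  have h3 : D + ((b • 1) * (c • 1) - D) + (b • (1 : Matrix (Fin 2) (Fin 2) F)) * (-(c • 1)) = 0 := by
    rw [mul_neg]; abel
  rw [h1, h2, h3]; exact blk3_one

theorem inv_mem_N : ∀ x ∈ Nset F, x⁻¹ ∈ Nset F := by
  rintro x ⟨b, c, D, hx⟩
  refine ⟨-b, -c, (b • 1) * (c • 1) - D, ?_⟩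
  rw [inv_coe_N hx, neg_smul, neg_smul]

/-- `N` as a subgroup. -/
def Nsub (F : Type*) [Field F] [Fintype F] : Subgroup (SL6 F) where
  carrier := Nset F
  one_mem' := one_mem_N
  mul_mem' := fun hx hy => mul_mem_N _ hx _ hy
  inv_mem' := fun hx => inv_mem_N _ hx

theorem conj_gen : ∀ g ∈ Hset F ∪ Mset F, ∀ x ∈ Nset F, g * x * g⁻¹ ∈ Nset F := by
  rintro g (⟨A, hg⟩ | ⟨B, C, Dg, hB, hC, hg⟩) x ⟨b, c, D, hx⟩
  · -- H generator
    have hAA : (A : Matrix (Fin 2) (Fin 2) F) * ((A⁻¹ : Matrix.SpecialLinearGroup (Fin 2) F) : Matrix (Fin 2) (Fin 2) F) = 1 := by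
      rw [← Matrix.SpecialLinearGroup.coe_mul, mul_inv_cancel, Matrix.SpecialLinearGroup.coe_one]
    have hginv : ((g⁻¹ : SL6 F) : Matrix (Fin 3 × Fin 2) (Fin 3 × Fin 2) F) =
        Dm ((A⁻¹ : Matrix.SpecialLinearGroup (Fin 2) F) : Matrix (Fin 2) (Fin 2) F) := by
      apply coe_inv_eq
      rw [hg, Dm_mul_Dm, hAA, ← blk3_one]
    refine ⟨b, c, (A : Matrix (Fin 2) (Fin 2) F) * D * ((A⁻¹ : Matrix.SpecialLinearGroup (Fin 2) F) : Matrix (Fin 2) (Fin 2) F), ?_⟩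
    rw [Matrix.SpecialLinearGroup.coe_mul, Matrix.SpecialLinearGroup.coe_mul,
      hginv, hg, hx, Dm_conj _ _ _ _ _ hAA]
    have hbs : (A : Matrix (Fin 2) (Fin 2) F) * (b • 1) * ((A⁻¹ : Matrix.SpecialLinearGroup (Fin 2) F) : Matrix (Fin 2) (Fin 2) F) = b • 1 := by
      rw [mul_smul_comm, mul_one, smul_mul_assoc, hAA]
    have hcs : (A : Matrix (Fin 2) (Fin 2) F) * (c • 1) * ((A⁻¹ : Matrix.SpecialLinearGroup (Fin 2) F) : Matrix (Fin 2) (Fin 2) F) = c • 1 := by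
      rw [mul_smul_comm, mul_one, smul_mul_assoc, hAA]
    rw [hbs, hcs]
  · -- M generator
    have hginv : ((g⁻¹ : SL6 F) : Matrix (Fin 3 × Fin 2) (Fin 3 × Fin 2) F) =
        Tm (-B) (-C) (B * C - Dg) := by
      apply coe_inv_eq
      rw [hg, Tm_mul]
      have h1 : B + -B = 0 := by abel
      have h2 : C + -C = 0 := by abel
      have h3 : Dg + (B * C - Dg) + B * (-C) = 0 := by rw [mul_neg]; abel
      rw [h1, h2, h3]; exact blk3_one
    refine ⟨b, c,
      Dg + D + B * (c • 1) + (B * C - Dg) + (B + b • 1) * (-C), ?_⟩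
    rw [Matrix.SpecialLinearGroup.coe_mul, Matrix.SpecialLinearGroup.coe_mul,
      hginv, hg, hx, Tm_mul, Tm_mul]
    have h1 : B + b • (1 : Matrix (Fin 2) (Fin 2) F) + -B = b • 1 := by abel
    have h2 : C + c • (1 : Matrix (Fin 2) (Fin 2) F) + -C = c • 1 := by abel
    rw [h1, h2]

theorem inv_gen : ∀ g ∈ Hset F ∪ Mset F, g⁻¹ ∈ Hset F ∪ Mset F := by
  rintro g (⟨A, hg⟩ | ⟨B, C, Dg, hB, hC, hg⟩)
  · left
    refine ⟨A⁻¹, ?_⟩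
    apply coe_inv_eq
    rw [hg]
    have hAA : (A : Matrix (Fin 2) (Fin 2) F) * ((A⁻¹ : Matrix.SpecialLinearGroup (Fin 2) F) : Matrix (Fin 2) (Fin 2) F) = 1 := by
      rw [← Matrix.SpecialLinearGroup.coe_mul, mul_inv_cancel, Matrix.SpecialLinearGroup.coe_one]
    rw [show (blk3 ![![((A⁻¹ : Matrix.SpecialLinearGroup (Fin 2) F) : Matrix (Fin 2) (Fin 2) F),0,0],![0,_,0],![0,0,_]] : Matrix _ _ F) = Dm _ from rfl]
    rw [Dm_mul_Dm, hAA, ← blk3_one]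
  · right
    refine ⟨-B, -C, B * C - Dg, by rw [Matrix.trace_neg, hB, neg_zero],
      by rw [Matrix.trace_neg, hC, neg_zero], ?_⟩
    apply coe_inv_eq
    rw [hg, Tm_mul]
    have h1 : B + -B = 0 := by abel
    have h2 : C + -C = 0 := by abel
    have h3 : Dg + (B * C - Dg) + B * (-C) = 0 := by rw [mul_neg]; abel
    rw [h1, h2, h3]; exact blk3_one

end SL6Aux

/-- **Lemma SL6 (3).** `N` is a normal subgroup of `G`: the set `N` is a subgroup
(it coincides with the subgroup it generates) and it is normalized by every
element of `G`. -/
theorem Nset_normal_in_Gsub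
    (F : Type*) [Field F] [Fintype F] (hF : Fintype.card F = 4) :
    ((Subgroup.closure (Nset F) : Set (SL6 F)) = Nset F) ∧
    ∀ g ∈ Gsub F, ∀ x ∈ Nset F, g * x * g⁻¹ ∈ Nset F := by
  constructor
  · rw [show Nset F = (SL6Aux.Nsub F : Set (SL6 F)) from rfl, Subgroup.closure_eq]
  · have hle : Gsub F ≤ Subgroup.normalizer (SL6Aux.Nsub F : Set (SL6 F)) := by
      rw [Gsub, Subgroup.closure_le]
      intro g hg
      rw [SetLike.mem_coe, Subgroup.mem_normalizer_iff]
      intro h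
      constructor
      · exact SL6Aux.conj_gen g hg h
      · intro hh
        have h2 := SL6Aux.conj_gen g⁻¹ (SL6Aux.inv_gen g hg) _ hh
        rwa [show g⁻¹ * (g * h * g⁻¹) * g⁻¹⁻¹ = h by group] at h2
    intro g hg x hx
    exact (Subgroup.mem_normalizer_iff.mp (hle hg) x).mp hx
end
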